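/- arXiv:1206.1906 — 7 statements merged into one kernel-verified Lean document; each statement's English description precedes it below -/
import Mathlib

section
/- Let H be a regular graph of degree k(H) that is not a complete graph. Then |V(H)| ≥ 2k(H) − min{λ(H), μ(H) − 2}, where λ(H) (resp. μ(H)) denotes the maximum number of common neighbors of any two distinct adjacent (resp. nonadjacent) vertices of H. -/
open Finset

variable {α β V : Type*}

/-- The corona product `G ⊙ H`. -/
def SimpleGraph.corona (G : SimpleGraph α) (H : SimpleGraph β) :
    SimpleGraph (α ⊕ α × β) where
  Adj x y :=
    match x, y with
    | Sum.inl u1, Sum.inl u2 => G.Adj u1 u2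
    | Sum.inl u1, Sum.inr p => u1 = p.1
    | Sum.inr p, Sum.inl u2 => p.1 = u2
    | Sum.inr p, Sum.inr q => p.1 = q.1 ∧ H.Adj p.2 q.2
  symm := by
    constructor
    rintro (u1 | p) (u2 | q) h
    · exact h.symm
    · exact h.symm
    · exact h.symm
    · exact ⟨h.1.symm, h.2.symm⟩
  loopless := by
    constructor
    rintro (u | p) h
    · exact G.irrefl h
    · exact H.irrefl h.2

/-- The lexicographic product `G[H]`. -/
def SimpleGraph.lexProd (G : SimpleGraph α) (H : SimpleGraph β) :
    SimpleGraph (α × β) where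
  Adj x y := G.Adj x.1 y.1 ∨ (x.1 = y.1 ∧ H.Adj x.2 y.2)
  symm := by
    constructor
    rintro x y (h | ⟨h1, h2⟩)
    · exact Or.inl h.symm
    · exact Or.inr ⟨h1.symm, h2.symm⟩
  loopless := by
    constructor
    rintro x (h | ⟨h1, h2⟩)
    · exact G.irrefl h
    · exact H.irrefl h2

open scoped Classical in
/-- `R_F{x,y}`: the set of vertices resolving `x` and `y` (distance measured by `edist`,
which is `∞` between vertices in different components). -/
noncomputable def resolvingFinset (F : SimpleGraph V) [Fintype V] (x y : V) : Finset V :=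
  univ.filter fun z => F.edist x z ≠ F.edist y z

/-- `S_H{v₁,v₂} = {v₁,v₂} ∪ (N_H(v₁) Δ N_H(v₂))`. -/
def locatingFinset (H : SimpleGraph V) [Fintype V] [DecidableEq V]
    [DecidableRel H.Adj] (v1 v2 : V) : Finset V :=
  {v1, v2} ∪ symmDiff (H.neighborFinset v1) (H.neighborFinset v2)

/-- A resolving function of `F`. -/
def IsResolvingFn (F : SimpleGraph V) [Fintype V] (g : V → ℝ) : Prop :=
  (∀ v, g v ∈ Set.Icc (0 : ℝ) 1) ∧
    ∀ x y : V, x ≠ y → 1 ≤ ∑ z ∈ resolvingFinset F x y, g z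

/-- The fractional metric dimension `dim_f(F)`. -/
noncomputable def fracMetricDim (F : SimpleGraph V) [Fintype V] : ℝ :=
  sInf {w | ∃ g, IsResolvingFn F g ∧ w = ∑ v, g v}

/-- A locating function of `H`. -/
def IsLocatingFn (H : SimpleGraph V) [Fintype V] [DecidableEq V]
    [DecidableRel H.Adj] (g : V → ℝ) : Prop :=
  (∀ v, g v ∈ Set.Icc (0 : ℝ) 1) ∧
    ∀ v1 v2 : V, v1 ≠ v2 → 1 ≤ ∑ v ∈ locatingFinset H v1 v2, g v

/-- `l_f(H)`: the minimum weight of a locating function. -/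
noncomputable def fracLoc (H : SimpleGraph V) [Fintype V] [DecidableEq V]
    [DecidableRel H.Adj] : ℝ :=
  sInf {w | ∃ g, IsLocatingFn H g ∧ w = ∑ v, g v}

open scoped Classical in
/-- `λ(H)`: maximum number of common neighbours of two adjacent vertices, `-1` if no edges. -/
noncomputable def lambdaMax (H : SimpleGraph V) [Fintype V] : ℤ :=
  if hne : (univ.filter fun p : V × V => H.Adj p.1 p.2).Nonempty then
    (univ.filter fun p : V × V => H.Adj p.1 p.2).sup' hne fun p =>
      ((univ.filter fun w => H.Adj p.1 w ∧ H.Adj p.2 w).card : ℤ)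
  else -1

open scoped Classical in
/-- `μ(H)`: maximum number of common neighbours of two distinct nonadjacent vertices,
`0` for complete graphs. -/
noncomputable def muMax (H : SimpleGraph V) [Fintype V] : ℤ :=
  if hne : (univ.filter fun p : V × V => p.1 ≠ p.2 ∧ ¬H.Adj p.1 p.2).Nonempty then
    (univ.filter fun p : V × V => p.1 ≠ p.2 ∧ ¬H.Adj p.1 p.2).sup' hne fun p =>
      ((univ.filter fun w => H.Adj p.1 w ∧ H.Adj p.2 w).card : ℤ)
  else 0

/-- A graph is vertex-transitive if its automorphism group is transitive on vertices. -/
def IsVertexTransitive (H : SimpleGraph V) : Prop :=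
  ∀ u v : V, ∃ φ : H ≃g H, φ u = v

/-- Two distinct vertices are twins if they have the same closed or the same open
neighbourhood. -/
def SimpleGraph.Twins (G : SimpleGraph V) (u1 u2 : V) : Prop :=
  u1 ≠ u2 ∧ (insert u1 (G.neighborSet u1) = insert u2 (G.neighborSet u2) ∨
    G.neighborSet u1 = G.neighborSet u2)

open scoped Classical in
/-- `m₁(G)`: number of vertices in twin-equivalence classes of type 1 (singletons). -/
noncomputable def m1 (G : SimpleGraph V) [Fintype V] : ℕ :=
  (univ.filter fun u => ∀ w, ¬G.Twins u w).card

open scoped Classical in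
/-- `m₂(G)`: number of vertices in twin-equivalence classes of type 2 (cliques). -/
noncomputable def m2 (G : SimpleGraph V) [Fintype V] : ℕ :=
  (univ.filter fun u => ∃ w, G.Twins u w ∧ G.Adj u w).card

open scoped Classical in
/-- `m₃(G)`: number of vertices in twin-equivalence classes of type 3 (independent sets). -/
noncomputable def m3 (G : SimpleGraph V) [Fintype V] : ℕ :=
  (univ.filter fun u => ∃ w, G.Twins u w ∧ ¬G.Adj u w).card

/-- A regular graph `H` (of degree `k`) with at least two vertices
that is not complete satisfies `|V(H)| ≥ 2k(H) - min{λ(H), μ(H) - 2}`. -/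
theorem stmt_0 {V : Type*} [Fintype V] [DecidableEq V] (H : SimpleGraph V)
    [DecidableRel H.Adj] (hcard : 2 ≤ Fintype.card V)
    (k : ℕ) (hreg : H.IsRegularOfDegree k) (hnc : H ≠ ⊤) :
    2 * (k : ℤ) - min (lambdaMax H) (muMax H - 2) ≤ (Fintype.card V : ℤ) := by
  set n : ℤ := (Fintype.card V : ℤ) with hn
  have hdeg : ∀ a : V, (H.neighborFinset a).card = k := fun a => hreg a
  -- existence of a nonadjacent distinct pair
  obtain ⟨u, v, huv, hadj⟩ : ∃ u v : V, u ≠ v ∧ ¬H.Adj u v := by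
    by_contra h
    push_neg at h
    apply hnc
    ext a b
    simp only [SimpleGraph.top_adj]
    exact ⟨fun h' => h'.ne, fun hne => h a b hne⟩
  have hmu : 2 * (k : ℤ) - n + 2 ≤ muMax H := by
    unfold muMax
    split
    case isFalse hne =>
      exact absurd ⟨(u, v), by simp [huv, hadj]⟩ hne
    case isTrue hne =>
      refine le_trans ?_ (Finset.le_sup' _ (b := (u, v)) (by simp [huv, hadj]))
      refine le_trans ?_ (Nat.cast_le.mpr (Finset.card_le_card
        (s := H.neighborFinset u ∩ H.neighborFinset v) fun w hw => ?_))
      · -- 2k - n + 2 ≤ #(N(u) ∩ N(v))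
        have hsub : H.neighborFinset u ∪ H.neighborFinset v ⊆ (univ.erase u).erase v := by
          intro w hw
          rcases Finset.mem_union.1 hw with hw | hw <;>
            rw [SimpleGraph.mem_neighborFinset] at hw
          · refine Finset.mem_erase.2 ⟨fun h => ?_, Finset.mem_erase.2 ⟨fun h => ?_, mem_univ _⟩⟩
            · exact hadj (h ▸ hw)
            · exact H.loopless.irrefl u (h ▸ hw)
          · refine Finset.mem_erase.2 ⟨fun h => ?_, Finset.mem_erase.2 ⟨fun h => ?_, mem_univ _⟩⟩
            · exact H.loopless.irrefl v (h ▸ hw)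
            · exact hadj (H.symm.symm v u (h ▸ hw))
        have hcard_union : (H.neighborFinset u ∪ H.neighborFinset v).card
            ≤ Fintype.card V - 2 := by
          have := Finset.card_le_card hsub
          have hv : v ∈ univ.erase u := Finset.mem_erase.2 ⟨huv.symm, mem_univ _⟩
          rw [Finset.card_erase_of_mem hv, Finset.card_erase_of_mem (mem_univ u)] at this
          simp only [Finset.card_univ] at this
          omega
        have hie := Finset.card_inter_add_card_union
          (H.neighborFinset u) (H.neighborFinset v)
        have hku := hdeg u
        have hkv := hdeg v
        have h2 : 2 ≤ Fintype.card V := hcard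
        omega
      · rw [Finset.mem_inter, SimpleGraph.mem_neighborFinset,
          SimpleGraph.mem_neighborFinset] at hw
        simp [hw.1, hw.2]
  have hlam : 2 * (k : ℤ) - n ≤ lambdaMax H := by
    unfold lambdaMax
    split
    case isTrue hne =>
      obtain ⟨⟨a, b⟩, hab⟩ := hne
      have hab' : H.Adj a b := by simpa using hab
      refine le_trans ?_ (Finset.le_sup' _ hab)
      refine le_trans ?_ (Nat.cast_le.mpr (Finset.card_le_card
        (s := H.neighborFinset a ∩ H.neighborFinset b) fun w hw => ?_))
      · have hcard_union : (H.neighborFinset a ∪ H.neighborFinset b).card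
            ≤ Fintype.card V := by
          simpa [Finset.card_univ] using
            Finset.card_le_card ((H.neighborFinset a ∪ H.neighborFinset b).subset_univ)
        have hie := Finset.card_inter_add_card_union
          (H.neighborFinset a) (H.neighborFinset b)
        have hka := hdeg a
        have hkb := hdeg b
        omega
      · rw [Finset.mem_inter, SimpleGraph.mem_neighborFinset,
          SimpleGraph.mem_neighborFinset] at hw
        simp [hw.1, hw.2]
    case isFalse hne =>
      have hk0 : k = 0 := by
        rcases Finset.eq_empty_or_nonempty (H.neighborFinset u) with he | ⟨w, hw⟩
        · have := hdeg u
          rw [he] at this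
          simpa using this.symm
        · exact absurd ⟨(u, w), by
            simp [(SimpleGraph.mem_neighborFinset H u w).1 hw]⟩ hne
      have h2 : 2 ≤ Fintype.card V := hcard
      subst hk0
      omega
  have hmin : 2 * (k : ℤ) - n ≤ min (lambdaMax H) (muMax H - 2) :=
    le_min hlam (by omega)
  omega
end

section
/- Let G be a connected graph and H a graph. Then dim_f(G⊙H) = |V(G)| · l_f(H). -/
open Finset

variable {α β V : Type*}

namespace CoronaAux

open SimpleGraph Finset

section Dist

variable {α β : Type*} (G : SimpleGraph α) (H : SimpleGraph β)

@[simp] lemma corona_adj_inl_inl {u v : α} :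
    (G.corona H).Adj (Sum.inl u) (Sum.inl v) ↔ G.Adj u v := Iff.rfl

@[simp] lemma corona_adj_inl_inr {u : α} {p : α × β} :
    (G.corona H).Adj (Sum.inl u) (Sum.inr p) ↔ u = p.1 := Iff.rfl

@[simp] lemma corona_adj_inr_inl {p : α × β} {v : α} :
    (G.corona H).Adj (Sum.inr p) (Sum.inl v) ↔ p.1 = v := Iff.rfl

@[simp] lemma corona_adj_inr_inr {p q : α × β} :
    (G.corona H).Adj (Sum.inr p) (Sum.inr q) ↔ p.1 = q.1 ∧ H.Adj p.2 q.2 := Iff.rfl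

open scoped Classical in
/-- The claimed distance function on the corona product. -/
noncomputable def coronaD : (α ⊕ α × β) → (α ⊕ α × β) → ℕ∞
  | Sum.inl u, Sum.inl w => G.edist u w
  | Sum.inl u, Sum.inr q => G.edist u q.1 + 1
  | Sum.inr p, Sum.inl w => G.edist p.1 w + 1
  | Sum.inr p, Sum.inr q =>
      if p.1 = q.1 then (if p.2 = q.2 then 0 else if H.Adj p.2 q.2 then 1 else 2)
      else G.edist p.1 q.1 + 2

lemma coronaD_self (x : α ⊕ α × β) : coronaD G H x x = 0 := by
  rcases x with u | ⟨u, b⟩ <;> simp [coronaD, SimpleGraph.edist_self]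

lemma edist_le_one_of_adj {u v : α} (h : G.Adj u v) : G.edist u v ≤ 1 := by
  simpa using SimpleGraph.edist_le h.toWalk

lemma edist_step {u v w : α} (h : G.Adj u v) : G.edist u w ≤ G.edist v w + 1 :=
  calc G.edist u w ≤ G.edist u v + G.edist v w := SimpleGraph.edist_triangle
    _ ≤ 1 + G.edist v w := add_le_add_left (edist_le_one_of_adj G h) _
    _ = G.edist v w + 1 := add_comm _ _

lemma coronaD_lipschitz {x y : α ⊕ α × β} (h : (G.corona H).Adj x y) (z : α ⊕ α × β) :
    coronaD G H x z ≤ coronaD G H y z + 1 := by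
  classical
  rcases x with u | ⟨u, b⟩ <;> rcases y with v | ⟨v, c⟩
  · -- inl u ~ inl v
    have hadj : G.Adj u v := h
    rcases z with w | ⟨w, d⟩
    · exact edist_step G hadj
    · show G.edist u w + 1 ≤ (G.edist v w + 1) + 1
      exact add_le_add_left (edist_step G hadj) 1
  · -- inl u ~ inr (v,c)
    obtain rfl : u = v := h
    rcases z with w | ⟨w, d⟩
    · show G.edist u w ≤ (G.edist u w + 1) + 1
      exact le_add_right (le_add_right le_rfl)
    · show G.edist u w + 1 ≤
        (if u = w then (if c = d then 0 else if H.Adj c d then 1 else 2)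
          else G.edist u w + 2) + 1
      by_cases hw : u = w
      · subst hw
        rw [if_pos rfl, SimpleGraph.edist_self, zero_add]
        exact le_add_self
      · rw [if_neg hw]
        exact add_le_add_left le_self_add 1
  · -- inr (u,b) ~ inl v
    obtain rfl : u = v := h
    rcases z with w | ⟨w, d⟩
    · show G.edist u w + 1 ≤ G.edist u w + 1
      exact le_rfl
    · show (if u = w then (if b = d then 0 else if H.Adj b d then 1 else 2)
          else G.edist u w + 2) ≤ (G.edist u w + 1) + 1
      by_cases hw : u = w
      · subst hw
        rw [if_pos rfl, SimpleGraph.edist_self, zero_add]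
        split_ifs <;> decide
      · rw [if_neg hw, add_assoc]
        norm_num
  · -- inr (u,b) ~ inr (v,c)
    obtain ⟨h1, hbc⟩ : u = v ∧ H.Adj b c := h
    subst h1
    rcases z with w | ⟨w, d⟩
    · show G.edist u w + 1 ≤ (G.edist u w + 1) + 1
      exact le_add_right le_rfl
    · show (if u = w then (if b = d then 0 else if H.Adj b d then 1 else 2)
          else G.edist u w + 2) ≤
        (if u = w then (if c = d then 0 else if H.Adj c d then 1 else 2)
          else G.edist u w + 2) + 1
      by_cases hw : u = w
      · rw [if_pos hw, if_pos hw]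
        by_cases h1 : b = d
        · simp [h1]
        · rw [if_neg h1]
          by_cases h2 : H.Adj b d
          · rw [if_pos h2]
            exact le_add_self
          · rw [if_neg h2]
            have hcd : c ≠ d := by rintro rfl; exact h2 hbc
            rw [if_neg hcd]
            split_ifs <;> decide
      · rw [if_neg hw, if_neg hw]
        exact le_add_right le_rfl

lemma coronaD_le_length {x y : α ⊕ α × β} (p : (G.corona H).Walk x y) :
    coronaD G H x y ≤ p.length := by
  induction p with
  | nil => simp [coronaD_self]
  | cons h q ih =>
      calc coronaD G H _ _ ≤ coronaD G H _ _ + 1 := coronaD_lipschitz G H h _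
        _ ≤ (q.length : ℕ∞) + 1 := add_le_add_left ih 1
        _ = _ := by rw [SimpleGraph.Walk.length_cons]; push_cast; ring

lemma coronaD_le_edist (x y : α ⊕ α × β) :
    coronaD G H x y ≤ (G.corona H).edist x y := by
  rw [SimpleGraph.edist_eq_sInf]
  refine le_sInf ?_
  rintro _ ⟨p, rfl⟩
  exact coronaD_le_length G H p

/-- The embedding of `G` into the corona product. -/
def coronaInl : G →g G.corona H := ⟨Sum.inl, fun h => h⟩

lemma edist_corona_inl_inr (u w : α) (c : β) :
    (G.corona H).edist (Sum.inl u) (Sum.inr (w, c)) = G.edist u w + 1 := by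
  refine le_antisymm ?_ ?_
  · rcases eq_or_ne (G.edist u w) ⊤ with h | h
    · simp [h]
    · obtain ⟨p, hp⟩ := SimpleGraph.exists_walk_of_edist_ne_top h
      have hadj : (G.corona H).Adj (Sum.inl w) (Sum.inr (w, c)) := rfl
      have hle := SimpleGraph.edist_le ((p.map (coronaInl G H)).concat hadj)
      rw [SimpleGraph.Walk.length_concat (p.map (coronaInl G H)) hadj, SimpleGraph.Walk.length_map] at hle
      calc (G.corona H).edist (Sum.inl u) (Sum.inr (w, c)) ≤ ((p.length + 1 : ℕ) : ℕ∞) := hle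
        _ = G.edist u w + 1 := by push_cast; rw [hp]
  · simpa [coronaD] using coronaD_le_edist G H (Sum.inl u) (Sum.inr (w, c))

lemma edist_corona_inr_inl (u w : α) (b : β) :
    (G.corona H).edist (Sum.inr (u, b)) (Sum.inl w) = G.edist u w + 1 := by
  rw [SimpleGraph.edist_comm, edist_corona_inl_inr, SimpleGraph.edist_comm]

open scoped Classical in
lemma edist_corona_same (u : α) (b c : β) :
    (G.corona H).edist (Sum.inr (u, b)) (Sum.inr (u, c)) =
      if b = c then 0 else if H.Adj b c then 1 else 2 := by
  classical
  refine le_antisymm ?_ ?_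
  · by_cases h1 : b = c
    · subst h1; simp [SimpleGraph.edist_self]
    · rw [if_neg h1]
      by_cases h2 : H.Adj b c
      · rw [if_pos h2]
        exact (edist_le_one_of_adj (G.corona H) (show (G.corona H).Adj _ _ from ⟨rfl, h2⟩))
      · rw [if_neg h2]
        simpa using SimpleGraph.edist_le
          (Walk.cons (show (G.corona H).Adj (Sum.inr (u, b)) (Sum.inl u) from rfl)
            (Walk.cons (show (G.corona H).Adj (Sum.inl u) (Sum.inr (u, c)) from rfl) Walk.nil))
  · have := coronaD_le_edist G H (Sum.inr (u, b)) (Sum.inr (u, c))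
    simpa [coronaD] using this

lemma edist_corona_same_le (u : α) (b c : β) :
    (G.corona H).edist (Sum.inr (u, b)) (Sum.inr (u, c)) ≤ 2 := by
  classical
  rw [edist_corona_same]
  split_ifs <;> decide

lemma edist_corona_inr_inr_ne {u w : α} (h : u ≠ w) (b c : β) :
    (G.corona H).edist (Sum.inr (u, b)) (Sum.inr (w, c)) = G.edist u w + 2 := by
  refine le_antisymm ?_ ?_
  · calc (G.corona H).edist (Sum.inr (u, b)) (Sum.inr (w, c))
        ≤ (G.corona H).edist (Sum.inr (u, b)) (Sum.inl u) +
          (G.corona H).edist (Sum.inl u) (Sum.inr (w, c)) := SimpleGraph.edist_triangle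
      _ ≤ 1 + (G.edist u w + 1) := by
          refine add_le_add ?_ ?_
          · exact edist_le_one_of_adj (G.corona H) (show (G.corona H).Adj _ _ from rfl)
          · rw [edist_corona_inl_inr]
      _ = G.edist u w + 2 := by ring
  · have := coronaD_le_edist G H (Sum.inr (u, b)) (Sum.inr (w, c))
    simpa [coronaD, if_neg h] using this

end Dist

end CoronaAux
section ENatHelpers

lemma enat_add_one_ne_one {a : ℕ∞} (h : a ≠ 0) : a + 1 ≠ 1 := by
  intro hc
  have hc' : a + 1 = 0 + 1 := by simpa using hc
  exact h (WithTop.add_right_cancel ENat.one_ne_top hc')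

lemma enat_add_one_ne_add_two {a : ℕ∞} (h : a ≠ ⊤) : a + 1 ≠ a + 2 := by
  lift a to ℕ using h
  intro hc
  have : (a : ℕ) + 1 = a + 2 := by exact_mod_cast hc
  omega

lemma enat_le_two_ne_add_two {a b : ℕ∞} (ha : a ≠ 0) (hb : b ≤ 2) : b ≠ a + 2 := by
  intro hc
  rw [hc] at hb
  have h2 : a + 2 ≤ 0 + 2 := by simpa using hb
  have h3 := (WithTop.add_le_add_iff_right (by simp : (2:ℕ∞) ≠ ⊤)).mp h2
  exact ha (le_antisymm h3 zero_le)

lemma enat_one_ne_add_two (a : ℕ∞) : (1 : ℕ∞) ≠ a + 2 := by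
  intro hc
  have h2 : (2 : ℕ∞) ≤ 1 := hc ▸ le_add_self
  exact absurd h2 (by decide)

end ENatHelpers

namespace CoronaAux

open SimpleGraph Finset

lemma mem_resolvingFinset {V : Type*} [Fintype V] (F : SimpleGraph V) {x y z : V} :
    z ∈ resolvingFinset F x y ↔ F.edist x z ≠ F.edist y z := by
  classical
  simp [resolvingFinset]

lemma resolvingFinset_comm {V : Type*} [Fintype V] (F : SimpleGraph V) (x y : V) :
    resolvingFinset F x y = resolvingFinset F y x := by
  ext z
  rw [mem_resolvingFinset, mem_resolvingFinset]
  exact ne_comm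

/-- The embedding of the `u`-th copy of `H` in the corona. -/
def inrEmb {α β : Type*} (u : α) : β ↪ α ⊕ α × β :=
  ⟨fun c => Sum.inr (u, c), fun a b hab => by simpa using hab⟩

section Resolve

variable {α β : Type*} [Fintype α] [Fintype β] [DecidableEq β]
variable (G : SimpleGraph α) (H : SimpleGraph β) [DecidableRel H.Adj]

lemma dvals_ne_iff {b1 b2 d : β} (hne : b1 ≠ b2) :
    ((if b1 = d then (0 : ℕ∞) else if H.Adj b1 d then 1 else 2) ≠
      (if b2 = d then (0 : ℕ∞) else if H.Adj b2 d then 1 else 2)) ↔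
      d ∈ locatingFinset H b1 b2 := by
  simp only [locatingFinset, Finset.mem_union, Finset.mem_insert, Finset.mem_singleton,
    Finset.mem_symmDiff, SimpleGraph.mem_neighborFinset]
  split_ifs with h1 h2 h2 h3 h4 h4 <;> simp_all <;>
    first
      | decide
      | (refine ⟨fun h => ?_, fun h => ?_⟩ <;> subst h <;> simp_all)

lemma edist_corona_same' (u : α) (b c : β) :
    (G.corona H).edist (Sum.inr (u, b)) (Sum.inr (u, c)) =
      if b = c then 0 else if H.Adj b c then 1 else 2 := by
  rw [edist_corona_same]
  split_ifs <;> rfl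

lemma resolving_same_copy (u : α) {b1 b2 : β} (hne : b1 ≠ b2) :
    resolvingFinset (G.corona H) (Sum.inr (u, b1)) (Sum.inr (u, b2)) =
      (locatingFinset H b1 b2).map (inrEmb u) := by
  ext z
  rw [mem_resolvingFinset, Finset.mem_map]
  rcases z with w | ⟨w, d⟩
  · rw [edist_corona_inr_inl, edist_corona_inr_inl]
    constructor
    · intro hz; exact absurd rfl hz
    · rintro ⟨c, -, hc⟩; simp [inrEmb] at hc
  · by_cases hw : w = u
    · subst hw
      rw [edist_corona_same' G H, edist_corona_same' G H, dvals_ne_iff H hne]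
      constructor
      · intro hd; exact ⟨d, hd, rfl⟩
      · rintro ⟨c, hc, hcd⟩
        obtain rfl : c = d := by change Sum.inr (w, c) = Sum.inr (w, d) at hcd; simpa [inrEmb] using hcd
        exact hc
    · have hw' : u ≠ w := fun h => hw h.symm
      rw [edist_corona_inr_inr_ne G H hw', edist_corona_inr_inr_ne G H hw']
      constructor
      · intro hz; exact absurd rfl hz
      · rintro ⟨c, -, hc⟩
        obtain ⟨h1, -⟩ : u = w ∧ c = d := by change Sum.inr (u, c) = Sum.inr (w, d) at hc; simpa [inrEmb] using hc
        exact absurd h1 hw'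

lemma sum_map_inrEmb (u : α) (g : α ⊕ α × β → ℝ) (s : Finset β) :
    ∑ z ∈ s.map (inrEmb u), g z = ∑ c ∈ s, g (Sum.inr (u, c)) :=
  Finset.sum_map _ _ _

end Resolve

end CoronaAux
open CoronaAux

/-- For a connected graph `G` and a graph `H`,
`dim_f(G ⊙ H) = |V(G)| · l_f(H)`. -/
theorem stmt_6 {α β : Type*} [Fintype α] [Fintype β] [DecidableEq β]
    (G : SimpleGraph α) (H : SimpleGraph β) [DecidableRel H.Adj]
    (hG : G.Connected) (hca : 2 ≤ Fintype.card α) (hcb : 2 ≤ Fintype.card β) :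
    fracMetricDim (G.corona H) = (Fintype.card α : ℝ) * fracLoc H := by
  classical
  set K := G.corona H with hK
  set SD : Set ℝ := {w | ∃ g, IsResolvingFn K g ∧ w = ∑ v, g v} with hSD
  set SL : Set ℝ := {w | ∃ g, IsLocatingFn H g ∧ w = ∑ v, g v} with hSL
  have hbddD : BddBelow SD := ⟨0, by
    rintro w ⟨g, hg, rfl⟩
    exact Finset.sum_nonneg fun v _ => (hg.1 v).1⟩
  have hbddL : BddBelow SL := ⟨0, by
    rintro w ⟨g, hg, rfl⟩
    exact Finset.sum_nonneg fun v _ => (hg.1 v).1⟩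
  have honel : IsLocatingFn H (fun _ => 1) := by
    refine ⟨fun v => ⟨zero_le_one, le_rfl⟩, fun v1 v2 h => ?_⟩
    rw [Finset.sum_const, nsmul_eq_mul, mul_one]
    have hv1 : v1 ∈ locatingFinset H v1 v2 :=
      Finset.mem_union_left _ (Finset.mem_insert_self _ _)
    exact_mod_cast Finset.card_pos.mpr ⟨v1, hv1⟩
  have hLne : SL.Nonempty := ⟨_, (fun _ => 1), honel, rfl⟩
  have honer : IsResolvingFn K (fun _ => 1) := by
    refine ⟨fun v => ⟨zero_le_one, le_rfl⟩, fun x y hxy => ?_⟩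
    rw [Finset.sum_const, nsmul_eq_mul, mul_one]
    have hx : x ∈ resolvingFinset K x y := by
      rw [mem_resolvingFinset, SimpleGraph.edist_self]
      exact fun hc => hxy (SimpleGraph.edist_eq_zero_iff.mp hc.symm).symm
    exact_mod_cast Finset.card_pos.mpr ⟨x, hx⟩
  have hDne : SD.Nonempty := ⟨_, (fun _ => 1), honer, rfl⟩
  have hnpos : (0 : ℝ) < (Fintype.card α : ℝ) := by
    have : 0 < Fintype.card α := by omega
    exact_mod_cast this
  -- Lower bound
  have hlow : (Fintype.card α : ℝ) * fracLoc H ≤ fracMetricDim K := by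
    refine le_csInf hDne ?_
    rintro w ⟨g, hg, rfl⟩
    have key : ∀ u : α, fracLoc H ≤ ∑ c : β, g (Sum.inr (u, c)) := by
      intro u
      refine csInf_le hbddL ⟨fun c => g (Sum.inr (u, c)), ⟨fun c => hg.1 _, ?_⟩, rfl⟩
      intro b1 b2 hb
      have h1 := hg.2 _ _ (show (Sum.inr (u, b1) : α ⊕ α × β) ≠ Sum.inr (u, b2) by simp [hb])
      rwa [hK, resolving_same_copy G H u hb, sum_map_inrEmb] at h1
    calc (Fintype.card α : ℝ) * fracLoc H = ∑ _u : α, fracLoc H := by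
          rw [Finset.sum_const, nsmul_eq_mul, Finset.card_univ]
      _ ≤ ∑ u : α, ∑ c : β, g (Sum.inr (u, c)) := Finset.sum_le_sum fun u _ => key u
      _ ≤ ∑ v, g v := by
          rw [Fintype.sum_sum_type, Fintype.sum_prod_type]
          exact le_add_of_nonneg_left (Finset.sum_nonneg fun u _ => (hg.1 _).1)
  -- Upper bound
  have hup : fracMetricDim K ≤ (Fintype.card α : ℝ) * fracLoc H := by
    have hstep : ∀ w ∈ SL, fracMetricDim K ≤ (Fintype.card α : ℝ) * w := by
      rintro w ⟨h, hh, rfl⟩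
      set g : α ⊕ α × β → ℝ := Sum.elim (fun _ => 0) (fun p => h p.2) with hgdef
      have hg0 : ∀ v, 0 ≤ g v := by
        rintro (u | ⟨u, c⟩)
        · exact le_rfl
        · exact (hh.1 c).1
      have hsum_copy : ∀ u : α, (1 : ℝ) ≤ ∑ z ∈ Finset.univ.map (inrEmb u), g z := by
        intro u
        rw [sum_map_inrEmb]
        obtain ⟨v1, v2, hv⟩ := Fintype.exists_pair_of_one_lt_card
          (show 1 < Fintype.card β by omega)
        calc (1 : ℝ) ≤ ∑ c ∈ locatingFinset H v1 v2, h c := hh.2 v1 v2 hv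
          _ ≤ ∑ c : β, h c := Finset.sum_le_sum_of_subset_of_nonneg (Finset.subset_univ _)
              (fun c _ _ => (hh.1 c).1)
          _ = ∑ c : β, g (Sum.inr (u, c)) := rfl
      have hdom : ∀ (x y : α ⊕ α × β) (T : Finset (α ⊕ α × β)),
          T ⊆ resolvingFinset K x y → (1 : ℝ) ≤ ∑ z ∈ T, g z →
          1 ≤ ∑ z ∈ resolvingFinset K x y, g z := fun x y T hT h1 =>
        h1.trans (Finset.sum_le_sum_of_subset_of_nonneg hT fun z _ _ => hg0 z)
      -- the inl-inr case, needed twice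
      have main2 : ∀ (u v : α) (c : β),
          1 ≤ ∑ z ∈ resolvingFinset K (Sum.inl u) (Sum.inr (v, c)), g z := by
        intro u v c
        by_cases hv : u = v
        · subst hv
          obtain ⟨w, hwu⟩ := Fintype.exists_ne_of_one_lt_card
            (show 1 < Fintype.card α by omega) u
          refine hdom _ _ (Finset.univ.map (inrEmb w)) ?_ (hsum_copy w)
          intro z hz
          obtain ⟨d, -, rfl⟩ := Finset.mem_map.mp hz
          rw [mem_resolvingFinset]
          show K.edist (Sum.inl u) (Sum.inr (w, d)) ≠ K.edist (Sum.inr (u, c)) (Sum.inr (w, d))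
          rw [hK, edist_corona_inl_inr, edist_corona_inr_inr_ne G H (Ne.symm hwu)]
          exact enat_add_one_ne_add_two
            (SimpleGraph.edist_ne_top_iff_reachable.mpr (hG.preconnected u w))
        · refine hdom _ _ (Finset.univ.map (inrEmb u)) ?_ (hsum_copy u)
          intro z hz
          obtain ⟨d, -, rfl⟩ := Finset.mem_map.mp hz
          rw [mem_resolvingFinset]
          show K.edist (Sum.inl u) (Sum.inr (u, d)) ≠ K.edist (Sum.inr (v, c)) (Sum.inr (u, d))
          rw [hK, edist_corona_inl_inr, edist_corona_inr_inr_ne G H (Ne.symm hv),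
            SimpleGraph.edist_self, zero_add]
          exact enat_one_ne_add_two _
      have hres : IsResolvingFn K g := by
        refine ⟨?_, ?_⟩
        · rintro (u | ⟨u, c⟩)
          · exact ⟨le_rfl, zero_le_one⟩
          · exact hh.1 c
        · rintro (u | ⟨u, b⟩) (v | ⟨v, c⟩) hxy
          · -- inl, inl
            have huv : u ≠ v := fun h => hxy (by rw [h])
            refine hdom _ _ (Finset.univ.map (inrEmb u)) ?_ (hsum_copy u)
            intro z hz
            obtain ⟨d, -, rfl⟩ := Finset.mem_map.mp hz
            rw [mem_resolvingFinset]
            show K.edist (Sum.inl u) (Sum.inr (u, d)) ≠ K.edist (Sum.inl v) (Sum.inr (u, d))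
            rw [hK, edist_corona_inl_inr, edist_corona_inl_inr,
              SimpleGraph.edist_self, zero_add]
            exact (enat_add_one_ne_one
              (fun h0 => huv (SimpleGraph.edist_eq_zero_iff.mp h0).symm)).symm
          · exact main2 u v c
          · rw [resolvingFinset_comm]
            exact main2 v u b
          · by_cases huv : u = v
            · subst huv
              have hbc : b ≠ c := fun h => hxy (by rw [h])
              have h1 := hsum_copy u  -- not needed; direct
              rw [hK, resolving_same_copy G H u hbc, sum_map_inrEmb]
              exact hh.2 b c hbc
            · refine hdom _ _ (Finset.univ.map (inrEmb u)) ?_ (hsum_copy u)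
              intro z hz
              obtain ⟨d, -, rfl⟩ := Finset.mem_map.mp hz
              rw [mem_resolvingFinset]
              show K.edist (Sum.inr (u, b)) (Sum.inr (u, d)) ≠
                K.edist (Sum.inr (v, c)) (Sum.inr (u, d))
              rw [hK, edist_corona_inr_inr_ne G H (Ne.symm huv)]
              exact enat_le_two_ne_add_two
                (fun h0 => huv (SimpleGraph.edist_eq_zero_iff.mp h0).symm)
                (edist_corona_same_le G H u b d)
      have hle : fracMetricDim K ≤ ∑ v, g v := csInf_le hbddD ⟨g, hres, rfl⟩
      calc fracMetricDim K ≤ ∑ v, g v := hle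
        _ = (Fintype.card α : ℝ) * ∑ c, h c := by
            rw [Fintype.sum_sum_type, Fintype.sum_prod_type]
            simp only [hgdef, Sum.elim_inl, Sum.elim_inr]
            rw [Finset.sum_const, smul_zero, zero_add, Finset.sum_const, Finset.card_univ,
              nsmul_eq_mul]
    have h2 : fracMetricDim K / (Fintype.card α : ℝ) ≤ fracLoc H := by
      refine le_csInf hLne fun w hw => ?_
      rw [div_le_iff₀ hnpos]
      exact (hstep w hw).trans_eq (mul_comm _ _)
    calc fracMetricDim K = fracMetricDim K / (Fintype.card α : ℝ) * (Fintype.card α : ℝ) := by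
          field_simp
      _ ≤ fracLoc H * (Fintype.card α : ℝ) :=
          mul_le_mul_of_nonneg_right h2 hnpos.le
      _ = (Fintype.card α : ℝ) * fracLoc H := mul_comm _ _
  exact le_antisymm hup hlow
end

section
/- Let G be a connected graph and let H be a vertex-transitive graph. Then dim_f(G⊙H) = |V(G)||V(H)| / (2k(H) − max{2λ(H), 2μ(H) − 2}). -/
open Finset

set_option linter.unusedSectionVars false

variable {α β V : Type*}

section CoronaAux

open SimpleGraph Sum
open scoped Classical

variable {α β : Type*} [Fintype α] [Fintype β] [DecidableEq β]
variable (G : SimpleGraph α) (H : SimpleGraph β) [DecidableRel H.Adj]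

lemma corona_adj_inl_inl {i j : α} : (G.corona H).Adj (inl i) (inl j) ↔ G.Adj i j := Iff.rfl

lemma corona_adj_inl_inr {i : α} {p : α × β} : (G.corona H).Adj (inl i) (inr p) ↔ i = p.1 :=
  Iff.rfl

lemma corona_adj_inr_inl {p : α × β} {j : α} : (G.corona H).Adj (inr p) (inl j) ↔ p.1 = j :=
  Iff.rfl

lemma corona_adj_inr_inr {p q : α × β} :
    (G.corona H).Adj (inr p) (inr q) ↔ p.1 = q.1 ∧ H.Adj p.2 q.2 := Iff.rfl

lemma two_le_enat {a : ℕ∞} (h0 : a ≠ 0) (h1 : a ≠ 1) : 2 ≤ a := by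
  induction a using ENat.recTopCoe with
  | top => exact le_top
  | coe n =>
    have h0' : n ≠ 0 := by simpa using h0
    have h1' : n ≠ 1 := by exact_mod_cast h1
    exact_mod_cast (by omega : 2 ≤ n)

lemma edist_hub (i : α) (v : β) : (G.corona H).edist (inl i) (inr (i, v)) = 1 :=
  SimpleGraph.edist_eq_one_iff_adj.mpr rfl

lemma edist_hub' (i : α) (v : β) : (G.corona H).edist (inr (i, v)) (inl i) = 1 :=
  SimpleGraph.edist_eq_one_iff_adj.mpr rfl

lemma hub_mem_support {i : α} : ∀ {x y : α ⊕ α × β} (p : (G.corona H).Walk x y),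
    (∀ w, x ≠ inr (i, w)) → (∃ w, y = inr (i, w)) → inl i ∈ p.support := by
  intro x y p
  induction p with
  | nil =>
    rintro hx ⟨w, rfl⟩
    exact absurd rfl (hx w)
  | @cons a b c h q ih =>
    intro hx hy
    by_cases hb : ∃ w, b = inr (i, w)
    · obtain ⟨w, rfl⟩ := hb
      cases a with
      | inl j =>
        have hj : j = i := h
        subst hj
        exact SimpleGraph.Walk.start_mem_support _
      | inr p' =>
        exfalso
        obtain ⟨j, w'⟩ := p'
        have hj : j = i := h.1
        subst hj
        exact hx w' rfl
    · have hmem := ih (fun w hw => hb ⟨w, hw⟩) hy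
      simp only [SimpleGraph.Walk.support_cons, List.mem_cons]
      exact Or.inr hmem

lemma edist_inr (i : α) (v : β) (z : α ⊕ α × β) (hz : ∀ w, z ≠ inr (i, w)) :
    (G.corona H).edist z (inr (i, v)) = (G.corona H).edist z (inl i) + 1 := by
  refine le_antisymm ?_ ?_
  · calc (G.corona H).edist z (inr (i, v))
        ≤ (G.corona H).edist z (inl i) + (G.corona H).edist (inl i) (inr (i, v)) :=
          SimpleGraph.edist_triangle
      _ = (G.corona H).edist z (inl i) + 1 := by rw [edist_hub]
  · rcases eq_or_ne ((G.corona H).edist z (inr (i, v))) ⊤ with h | h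
    · rw [h]; exact le_top
    · obtain ⟨p, hp⟩ := SimpleGraph.exists_walk_of_edist_ne_top h
      have hmem : inl i ∈ p.support := hub_mem_support G H p hz ⟨v, rfl⟩
      have h1 : (G.corona H).edist z (inl i) ≤ (p.takeUntil _ hmem).length :=
        SimpleGraph.edist_le _
      have h2 : 1 ≤ (p.dropUntil _ hmem).length := by
        by_contra hcon
        push_neg at hcon
        have hl0 : (p.dropUntil _ hmem).length = 0 := by omega
        have := SimpleGraph.Walk.eq_of_length_eq_zero hl0
        simp at this
      have h3 : (p.takeUntil _ hmem).length + (p.dropUntil _ hmem).length = p.length := by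
        have h4 := congrArg SimpleGraph.Walk.length (p.take_spec hmem)
        rwa [SimpleGraph.Walk.length_append] at h4
      rw [← hp, ← h3]
      push_cast
      exact add_le_add h1 (by exact_mod_cast h2)

lemma edist_inr_same_adj (i : α) {u v : β} (h : H.Adj u v) :
    (G.corona H).edist (inr (i, u)) (inr (i, v)) = 1 :=
  SimpleGraph.edist_eq_one_iff_adj.mpr ⟨rfl, h⟩

lemma edist_inr_same_nonadj (i : α) {u v : β} (hne : u ≠ v) (h : ¬H.Adj u v) :
    (G.corona H).edist (inr (i, u)) (inr (i, v)) = 2 := by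
  refine le_antisymm ?_ ?_
  · calc (G.corona H).edist (inr (i, u)) (inr (i, v))
        ≤ (G.corona H).edist (inr (i, u)) (inl i) + (G.corona H).edist (inl i) (inr (i, v)) :=
          SimpleGraph.edist_triangle
      _ = 2 := by rw [edist_hub, edist_hub']; rfl
  · refine two_le_enat ?_ ?_
    · rw [Ne, SimpleGraph.edist_eq_zero_iff]
      simp [Prod.ext_iff, hne]
    · rw [Ne, SimpleGraph.edist_eq_one_iff_adj, corona_adj_inr_inr]
      simp [h]

lemma resolving_eq_locating (i : α) {v1 v2 : β} (hv : v1 ≠ v2) :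
    resolvingFinset (G.corona H) (inr (i, v1)) (inr (i, v2)) =
      (locatingFinset H v1 v2).map
        ⟨fun v => inr (i, v), fun a b h => by simpa using h⟩ := by
  have hvmem : ∀ v : β, v ∈ ({v1, v2} : Finset β) → v ∈ locatingFinset H v1 v2 :=
    fun v hv => Finset.mem_union_left _ hv
  ext z
  simp only [resolvingFinset, Finset.mem_filter, Finset.mem_univ, true_and, Finset.mem_map,
    Function.Embedding.coeFn_mk]
  cases z with
  | inl j =>
    constructor
    · intro hne
      exfalso
      apply hne
      rw [SimpleGraph.edist_comm, edist_inr G H i v1 _ (by simp),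
        SimpleGraph.edist_comm (v := inl j), edist_inr G H i v2 _ (by simp)]
    · rintro ⟨a, _, hcon⟩
      simp at hcon
  | inr p =>
    obtain ⟨j, w⟩ := p
    by_cases hj : j = i
    · subst hj
      have hmemiff : (∃ a ∈ locatingFinset H v1 v2, inr (j, a) = (inr (j, w) : α ⊕ α × β)) ↔
          w ∈ locatingFinset H v1 v2 := by
        constructor
        · rintro ⟨a, ha, hae⟩
          simp only [inr.injEq, Prod.mk.injEq, true_and] at hae
          rwa [← hae]
        · intro hw
          exact ⟨w, hw, rfl⟩
      refine Iff.trans ?_ hmemiff.symm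
      by_cases hw1 : w = v1
      · subst hw1
        have h1 : (G.corona H).edist (inr (j, w)) (inr (j, w)) = 0 := SimpleGraph.edist_self
        have h2 : (G.corona H).edist (inr (j, v2)) (inr (j, w)) ≠ 0 := by
          rw [Ne, SimpleGraph.edist_eq_zero_iff]
          simp [Prod.ext_iff, hv.symm]
        constructor
        · intro _
          exact hvmem _ (by simp)
        · intro _
          rw [h1]
          exact fun hcon => h2 hcon.symm
      · by_cases hw2 : w = v2
        · subst hw2
          have h1 : (G.corona H).edist (inr (j, w)) (inr (j, w)) = 0 := SimpleGraph.edist_self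
          have h2 : (G.corona H).edist (inr (j, v1)) (inr (j, w)) ≠ 0 := by
            rw [Ne, SimpleGraph.edist_eq_zero_iff]
            simp [Prod.ext_iff, hv]
          constructor
          · intro _
            exact hvmem _ (by simp)
          · intro _
            rw [h1]
            exact h2
        · -- w distinct from v1 v2
          have hd1 : (G.corona H).edist (inr (j, v1)) (inr (j, w)) =
              if H.Adj v1 w then 1 else 2 := by
            split_ifs with hA
            · exact edist_inr_same_adj G H j hA
            · exact edist_inr_same_nonadj G H j (fun hc => hw1 hc.symm) hA
          have hd2 : (G.corona H).edist (inr (j, v2)) (inr (j, w)) =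
              if H.Adj v2 w then 1 else 2 := by
            split_ifs with hA
            · exact edist_inr_same_adj G H j hA
            · exact edist_inr_same_nonadj G H j (fun hc => hw2 hc.symm) hA
          rw [hd1, hd2]
          have hloc : w ∈ locatingFinset H v1 v2 ↔ ¬(H.Adj v1 w ↔ H.Adj v2 w) := by
            simp only [locatingFinset, Finset.mem_union, Finset.mem_insert,
              Finset.mem_singleton, Finset.mem_symmDiff, SimpleGraph.mem_neighborFinset]
            constructor
            · rintro ((h | h) | h)
              · exact absurd h hw1
              · exact absurd h hw2
              · rcases h with ⟨h1, h2⟩ | ⟨h1, h2⟩ <;> tauto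
            · intro h
              right
              by_cases hA : H.Adj v1 w
              · exact Or.inl ⟨hA, fun hc => h ⟨fun _ => hc, fun _ => hA⟩⟩
              · refine Or.inr ⟨?_, hA⟩
                by_contra hA2
                exact h ⟨fun hc => absurd hc hA, fun hc => absurd hc hA2⟩
          rw [hloc]
          constructor
          · intro hne
            by_cases hA1 : H.Adj v1 w <;> by_cases hA2 : H.Adj v2 w <;>
              simp [hA1, hA2] at hne ⊢
          · intro hne
            by_cases hA1 : H.Adj v1 w <;> by_cases hA2 : H.Adj v2 w <;>
              simp [hA1, hA2] at hne ⊢ <;> decide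
    · constructor
      · intro hne
        exfalso
        apply hne
        rw [SimpleGraph.edist_comm, edist_inr G H i v1 _
            (by intro w' hc; simp [Prod.ext_iff] at hc; exact hj hc.1),
          SimpleGraph.edist_comm (v := inr (j, w)), edist_inr G H i v2 _
            (by intro w' hc; simp [Prod.ext_iff] at hc; exact hj hc.1)]
      · rintro ⟨a, _, hcon⟩
        change (inr (i, a) : α ⊕ α × β) = inr (j, w) at hcon
        simp only [inr.injEq, Prod.mk.injEq] at hcon
        exact absurd hcon.1.symm hj


end CoronaAux

section CaBridge
-- NOTE: no `DecidableRel H.Adj` in scope here, so that all `Finset.filter` instances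
-- are the classical ones, exactly matching those inside `lambdaMax` and `muMax`.
open scoped Classical

variable {β : Type*} [Fintype β] (H : SimpleGraph β)

/-- Number of common neighbours (with classical decidability, matching `lambdaMax`). -/
noncomputable def caCC (x y : β) : ℤ :=
  ((univ.filter fun w => H.Adj x w ∧ H.Adj y w).card : ℤ)

lemma caCC_nonneg (x y : β) : 0 ≤ caCC H x y := by
  unfold caCC; positivity

lemma ca_lambda_def : lambdaMax H =
    if hne : (univ.filter fun p : β × β => H.Adj p.1 p.2).Nonempty then
      (univ.filter fun p : β × β => H.Adj p.1 p.2).sup' hne fun p => caCC H p.1 p.2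
    else -1 := rfl

lemma ca_mu_def : muMax H =
    if hne : (univ.filter fun p : β × β => p.1 ≠ p.2 ∧ ¬H.Adj p.1 p.2).Nonempty then
      (univ.filter fun p : β × β => p.1 ≠ p.2 ∧ ¬H.Adj p.1 p.2).sup' hne
        fun p => caCC H p.1 p.2
    else 0 := rfl

lemma ca_lambda_ub {x y : β} (hxy : H.Adj x y) : caCC H x y ≤ lambdaMax H := by
  rw [ca_lambda_def]
  have hne : (univ.filter fun p : β × β => H.Adj p.1 p.2).Nonempty :=
    ⟨(x, y), by simp [hxy]⟩
  rw [dif_pos hne]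
  exact Finset.le_sup' (fun p : β × β => caCC H p.1 p.2)
    (by simp [hxy] : ((x, y) : β × β) ∈ _)

lemma ca_lambda_ex (hE : ∃ x y : β, H.Adj x y) :
    ∃ x y : β, H.Adj x y ∧ caCC H x y = lambdaMax H := by
  rw [ca_lambda_def]
  obtain ⟨x, y, hxy⟩ := hE
  have hne : (univ.filter fun p : β × β => H.Adj p.1 p.2).Nonempty :=
    ⟨(x, y), by simp [hxy]⟩
  rw [dif_pos hne]
  obtain ⟨p, hp, heq⟩ := Finset.exists_mem_eq_sup' hne (fun p : β × β => caCC H p.1 p.2)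
  exact ⟨p.1, p.2, by simpa using hp, heq.symm⟩

lemma ca_lambda_none (hE : ¬∃ x y : β, H.Adj x y) : lambdaMax H = -1 := by
  rw [ca_lambda_def, dif_neg]
  rintro ⟨p, hp⟩
  exact hE ⟨p.1, p.2, by simpa using hp⟩

lemma ca_mu_ub {x y : β} (hne : x ≠ y) (hxy : ¬H.Adj x y) : caCC H x y ≤ muMax H := by
  rw [ca_mu_def]
  have hne' : (univ.filter fun p : β × β => p.1 ≠ p.2 ∧ ¬H.Adj p.1 p.2).Nonempty :=
    ⟨(x, y), by simp [hne, hxy]⟩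
  rw [dif_pos hne']
  exact Finset.le_sup' (fun p : β × β => caCC H p.1 p.2)
    (by simp [hne, hxy] : ((x, y) : β × β) ∈ _)

lemma ca_mu_ex (hN : ∃ x y : β, x ≠ y ∧ ¬H.Adj x y) :
    ∃ x y : β, x ≠ y ∧ ¬H.Adj x y ∧ caCC H x y = muMax H := by
  rw [ca_mu_def]
  obtain ⟨x, y, hne, hxy⟩ := hN
  have hne' : (univ.filter fun p : β × β => p.1 ≠ p.2 ∧ ¬H.Adj p.1 p.2).Nonempty :=
    ⟨(x, y), by simp [hne, hxy]⟩
  rw [dif_pos hne']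
  obtain ⟨p, hp, heq⟩ := Finset.exists_mem_eq_sup' hne' (fun p : β × β => caCC H p.1 p.2)
  simp only [Finset.mem_filter, Finset.mem_univ, true_and] at hp
  exact ⟨p.1, p.2, hp.1, hp.2, heq.symm⟩

lemma ca_mu_none (hN : ¬∃ x y : β, x ≠ y ∧ ¬H.Adj x y) : muMax H = 0 := by
  rw [ca_mu_def, dif_neg]
  rintro ⟨p, hp⟩
  simp only [Finset.mem_filter, Finset.mem_univ, true_and] at hp
  exact hN ⟨p.1, p.2, hp.1, hp.2⟩

end CaBridge

section CoronaAux3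

open SimpleGraph Sum
open scoped Classical

variable {β : Type*} [Fintype β] [DecidableEq β]
variable (H : SimpleGraph β) [DecidableRel H.Adj]

lemma ca_card_loc_adj {a b : β} (hab : H.Adj a b) :
    ((locatingFinset H a b).card : ℤ) =
      (H.degree a : ℤ) + H.degree b - 2 * caCC H a b := by
  have hD : locatingFinset H a b = symmDiff (H.neighborFinset a) (H.neighborFinset b) := by
    apply Finset.union_eq_right.mpr
    intro x hx
    simp only [Finset.mem_insert, Finset.mem_singleton] at hx
    rw [Finset.mem_symmDiff]
    rcases hx with rfl | rfl
    · exact Or.inr ⟨by simpa using hab.symm, by simp⟩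
    · exact Or.inl ⟨by simpa using hab, by simp⟩
  have hsd : symmDiff (H.neighborFinset a) (H.neighborFinset b) =
      (H.neighborFinset a \ H.neighborFinset b) ∪ (H.neighborFinset b \ H.neighborFinset a) := by
    rw [symmDiff_def, Finset.sup_eq_union]
  have hcap : caCC H a b = ((H.neighborFinset a ∩ H.neighborFinset b).card : ℤ) := by
    unfold caCC
    congr 1
    congr 1
    ext w
    simp [SimpleGraph.mem_neighborFinset]
  have hcap' : caCC H a b = ((H.neighborFinset b ∩ H.neighborFinset a).card : ℤ) := by
    rw [Finset.inter_comm]; exact hcap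
  have h1 := Finset.card_inter_add_card_sdiff (H.neighborFinset a) (H.neighborFinset b)
  have h2 := Finset.card_inter_add_card_sdiff (H.neighborFinset b) (H.neighborFinset a)
  have hdisj : Disjoint (H.neighborFinset a \ H.neighborFinset b)
      (H.neighborFinset b \ H.neighborFinset a) := disjoint_sdiff_sdiff
  have hcard := Finset.card_union_of_disjoint hdisj
  rw [hD, hsd, hcard]
  have hda : H.degree a = (H.neighborFinset a).card := rfl
  have hdb : H.degree b = (H.neighborFinset b).card := rfl
  rw [hda, hdb]
  push_cast [hcap, hcap'] at *
  omega

lemma ca_card_loc_nonadj {a b : β} (hne : a ≠ b) (hab : ¬H.Adj a b) :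
    ((locatingFinset H a b).card : ℤ) =
      2 + (H.degree a : ℤ) + H.degree b - 2 * caCC H a b := by
  have hdisj2 : Disjoint ({a, b} : Finset β)
      (symmDiff (H.neighborFinset a) (H.neighborFinset b)) := by
    rw [Finset.disjoint_left]
    intro x hx
    simp only [Finset.mem_insert, Finset.mem_singleton] at hx
    rw [Finset.mem_symmDiff]
    rcases hx with rfl | rfl
    · simp only [SimpleGraph.mem_neighborFinset]
      rintro (⟨h1, _⟩ | ⟨h1, _⟩)
      · exact H.irrefl h1
      · exact hab h1.symm
    · simp only [SimpleGraph.mem_neighborFinset]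
      rintro (⟨h1, _⟩ | ⟨h1, _⟩)
      · exact hab h1
      · exact H.irrefl h1
  have hcard2 : (locatingFinset H a b).card =
      2 + (symmDiff (H.neighborFinset a) (H.neighborFinset b)).card := by
    rw [locatingFinset, Finset.card_union_of_disjoint hdisj2, Finset.card_pair hne]
  have hsd : symmDiff (H.neighborFinset a) (H.neighborFinset b) =
      (H.neighborFinset a \ H.neighborFinset b) ∪ (H.neighborFinset b \ H.neighborFinset a) := by
    rw [symmDiff_def, Finset.sup_eq_union]
  have hcap : caCC H a b = ((H.neighborFinset a ∩ H.neighborFinset b).card : ℤ) := by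
    unfold caCC
    congr 1
    congr 1
    ext w
    simp [SimpleGraph.mem_neighborFinset]
  have hcap' : caCC H a b = ((H.neighborFinset b ∩ H.neighborFinset a).card : ℤ) := by
    rw [Finset.inter_comm]; exact hcap
  have h1 := Finset.card_inter_add_card_sdiff (H.neighborFinset a) (H.neighborFinset b)
  have h2 := Finset.card_inter_add_card_sdiff (H.neighborFinset b) (H.neighborFinset a)
  have hdisj : Disjoint (H.neighborFinset a \ H.neighborFinset b)
      (H.neighborFinset b \ H.neighborFinset a) := disjoint_sdiff_sdiff
  have hcard := Finset.card_union_of_disjoint hdisj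
  rw [hcard2, hsd, hcard]
  have hda : H.degree a = (H.neighborFinset a).card := rfl
  have hdb : H.degree b = (H.neighborFinset b).card := rfl
  rw [hda, hdb]
  push_cast [hcap, hcap'] at *
  omega

lemma ca_min_pair (hcb : 2 ≤ Fintype.card β) (k : ℕ) (hreg : H.IsRegularOfDegree k) :
    ∃ a b : β, a ≠ b ∧
      (∀ v1 v2 : β, v1 ≠ v2 → (locatingFinset H a b).card ≤ (locatingFinset H v1 v2).card) ∧
      ((locatingFinset H a b).card : ℤ) =
        2 * k - max (2 * lambdaMax H) (2 * muMax H - 2) := by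
  obtain ⟨x0, y0, hxy0⟩ := Fintype.exists_pair_of_one_lt_card (α := β) (by omega)
  have hPne : ((univ : Finset (β × β)).filter fun p : β × β => p.1 ≠ p.2).Nonempty :=
    ⟨(x0, y0), by simp [hxy0]⟩
  obtain ⟨p0, hp0P, hp0min⟩ := Finset.exists_min_image _
    (fun p : β × β => (locatingFinset H p.1 p.2).card) hPne
  have hp0ne : p0.1 ≠ p0.2 := by simpa using hp0P
  have hmin : ∀ v1 v2 : β, v1 ≠ v2 →
      (locatingFinset H p0.1 p0.2).card ≤ (locatingFinset H v1 v2).card :=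
    fun v1 v2 hv => hp0min (v1, v2) (by simp [hv])
  refine ⟨p0.1, p0.2, hp0ne, hmin, ?_⟩
  have hlb : 2 * (k : ℤ) - 2 * lambdaMax H ≤ ((locatingFinset H p0.1 p0.2).card : ℤ) ∨
      2 * (k : ℤ) + 2 - 2 * muMax H ≤ ((locatingFinset H p0.1 p0.2).card : ℤ) := by
    by_cases hA : H.Adj p0.1 p0.2
    · left
      have hc := ca_card_loc_adj H hA
      rw [hreg p0.1, hreg p0.2] at hc
      have hub := ca_lambda_ub H hA
      omega
    · right
      have hc := ca_card_loc_nonadj H hp0ne hA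
      rw [hreg p0.1, hreg p0.2] at hc
      have hub := ca_mu_ub H hp0ne hA
      omega
  by_cases hE : ∃ x y : β, H.Adj x y
  · have hub1 : ((locatingFinset H p0.1 p0.2).card : ℤ) ≤ 2 * (k : ℤ) - 2 * lambdaMax H := by
      obtain ⟨x, y, hxy, heq⟩ := ca_lambda_ex H hE
      have hc := ca_card_loc_adj H hxy
      rw [hreg x, hreg y] at hc
      have hm : ((locatingFinset H p0.1 p0.2).card : ℤ) ≤
          ((locatingFinset H x y).card : ℤ) := by exact_mod_cast hmin x y hxy.ne
      omega
    by_cases hN : ∃ x y : β, x ≠ y ∧ ¬H.Adj x y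
    · have hub2 : ((locatingFinset H p0.1 p0.2).card : ℤ) ≤
          2 * (k : ℤ) + 2 - 2 * muMax H := by
        obtain ⟨x, y, hne, hxy, heq⟩ := ca_mu_ex H hN
        have hc := ca_card_loc_nonadj H hne hxy
        rw [hreg x, hreg y] at hc
        have hm : ((locatingFinset H p0.1 p0.2).card : ℤ) ≤
            ((locatingFinset H x y).card : ℤ) := by exact_mod_cast hmin x y hne
        omega
      rcases le_total (2 * lambdaMax H) (2 * muMax H - 2) with h | h
      · rw [max_eq_right h]; omega
      · rw [max_eq_left h]; omega
    · have hmu0 : muMax H = 0 := ca_mu_none H hN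
      have hlam0 : 0 ≤ lambdaMax H := by
        obtain ⟨x, y, hxy, heq⟩ := ca_lambda_ex H hE
        have := caCC_nonneg H x y
        omega
      have hAall : H.Adj p0.1 p0.2 := by
        by_contra hA
        exact hN ⟨p0.1, p0.2, hp0ne, hA⟩
      have hlb' : 2 * (k : ℤ) - 2 * lambdaMax H ≤
          ((locatingFinset H p0.1 p0.2).card : ℤ) := by
        have hc := ca_card_loc_adj H hAall
        rw [hreg p0.1, hreg p0.2] at hc
        have hub := ca_lambda_ub H hAall
        omega
      rw [max_eq_left (by omega : 2 * muMax H - 2 ≤ 2 * lambdaMax H)]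
      omega
  · have hlamneg : lambdaMax H = -1 := ca_lambda_none H hE
    push_neg at hE
    have hN : ∃ x y : β, x ≠ y ∧ ¬H.Adj x y := ⟨x0, y0, hxy0, hE x0 y0⟩
    have hmu0 : 0 ≤ muMax H := by
      obtain ⟨x, y, hne, hxy, heq⟩ := ca_mu_ex H hN
      have := caCC_nonneg H x y
      omega
    have hub2 : ((locatingFinset H p0.1 p0.2).card : ℤ) ≤
        2 * (k : ℤ) + 2 - 2 * muMax H := by
      obtain ⟨x, y, hne, hxy, heq⟩ := ca_mu_ex H hN
      have hc := ca_card_loc_nonadj H hne hxy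
      rw [hreg x, hreg y] at hc
      have hm : ((locatingFinset H p0.1 p0.2).card : ℤ) ≤
          ((locatingFinset H x y).card : ℤ) := by exact_mod_cast hmin x y hne
      omega
    have hlb' : 2 * (k : ℤ) + 2 - 2 * muMax H ≤
        ((locatingFinset H p0.1 p0.2).card : ℤ) := by
      have hA : ¬H.Adj p0.1 p0.2 := hE p0.1 p0.2
      have hc := ca_card_loc_nonadj H hp0ne hA
      rw [hreg p0.1, hreg p0.2] at hc
      have hub := ca_mu_ub H hp0ne hA
      omega
    rw [max_eq_right (by omega : 2 * lambdaMax H ≤ 2 * muMax H - 2)]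
    omega


lemma ca_neighborFinset_map (φ : H ≃g H) (x : β) :
    H.neighborFinset (φ x) = (H.neighborFinset x).image φ := by
  ext w
  simp only [SimpleGraph.mem_neighborFinset, Finset.mem_image]
  constructor
  · intro h
    refine ⟨φ.symm w, ?_, φ.apply_symm_apply w⟩
    have h2 : H.Adj (φ x) (φ (φ.symm w)) := by rwa [φ.apply_symm_apply]
    exact φ.map_adj_iff.mp h2
  · rintro ⟨u, hu, rfl⟩
    exact φ.map_adj_iff.mpr hu

lemma ca_loc_map (φ : H ≃g H) (a b : β) :
    locatingFinset H (φ a) (φ b) = (locatingFinset H a b).image φ := by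
  rw [locatingFinset, locatingFinset, Finset.image_union]
  congr 1
  · rw [Finset.image_insert, Finset.image_singleton]
  · have hinj : Function.Injective (φ : β → β) := EquivLike.injective φ
    rw [ca_neighborFinset_map H φ a, ca_neighborFinset_map H φ b]
    ext w
    simp only [Finset.mem_symmDiff, Finset.mem_image]
    constructor
    · rintro (⟨⟨u, hu, rfl⟩, h2⟩ | ⟨⟨u, hu, rfl⟩, h2⟩)
      · exact ⟨u, Or.inl ⟨hu, fun hc => h2 ⟨u, hc, rfl⟩⟩, rfl⟩
      · exact ⟨u, Or.inr ⟨hu, fun hc => h2 ⟨u, hc, rfl⟩⟩, rfl⟩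
    · rintro ⟨u, (⟨h1, h2⟩ | ⟨h1, h2⟩), rfl⟩
      · refine Or.inl ⟨⟨u, h1, rfl⟩, ?_⟩
        rintro ⟨x, hx, he⟩
        rw [hinj he] at hx
        exact h2 hx
      · refine Or.inr ⟨⟨u, h1, rfl⟩, ?_⟩
        rintro ⟨x, hx, he⟩
        rw [hinj he] at hx
        exact h2 hx

lemma ca_avg (hvt : IsVertexTransitive H) {a b : β} (hab : a ≠ b)
    (hmin : ∀ v1 v2 : β, v1 ≠ v2 →
      (locatingFinset H a b).card ≤ (locatingFinset H v1 v2).card)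
    (g : β → ℝ) (h0 : ∀ v, 0 ≤ g v)
    (hc : ∀ v1 v2 : β, v1 ≠ v2 → 1 ≤ ∑ v ∈ locatingFinset H v1 v2, g v) :
    (Fintype.card β : ℝ) / ((locatingFinset H a b).card : ℝ) ≤ ∑ v, g v := by
  haveI : Fintype (H ≃g H) :=
    Fintype.ofInjective (fun φ : H ≃g H => (φ : β → β)) DFunLike.coe_injective
  have hspos : 0 < (locatingFinset H a b).card :=
    Finset.card_pos.mpr ⟨a, Finset.mem_union_left _ (by simp)⟩
  have hApos : 0 < Fintype.card (H ≃g H) := Fintype.card_pos_iff.mpr ⟨RelIso.refl _⟩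
  have key2 : ∀ v w : β, ∑ φ : H ≃g H, g (φ v) = ∑ φ : H ≃g H, g (φ w) := by
    intro v w
    obtain ⟨ψ, hψ⟩ := hvt w v
    have hli : ∀ χ : H ≃g H, ψ.symm.trans (ψ.trans χ) = χ := by
      intro χ
      ext x
      simp
    have hri : ∀ χ : H ≃g H, ψ.trans (ψ.symm.trans χ) = χ := by
      intro χ
      ext x
      simp
    let E : (H ≃g H) ≃ (H ≃g H) :=
      ⟨fun χ => ψ.trans χ, fun χ => ψ.symm.trans χ, hli, hri⟩
    calc ∑ φ : H ≃g H, g (φ v) = ∑ φ : H ≃g H, g ((E φ) w) := by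
          apply Finset.sum_congr rfl
          intro φ _
          have : (E φ) w = φ v := by
            show (ψ.trans φ) w = φ v
            rw [RelIso.trans_apply, hψ]
          rw [this]
      _ = ∑ φ : H ≃g H, g (φ w) := Fintype.sum_equiv E _ _ (fun φ => rfl)
  have key1 : ∀ φ : H ≃g H, (1 : ℝ) ≤ ∑ v ∈ locatingFinset H a b, g (φ v) := by
    intro φ
    have hsum : ∑ v ∈ locatingFinset H (φ a) (φ b), g v =
        ∑ v ∈ locatingFinset H a b, g (φ v) := by
      have hinj : Function.Injective (φ : β → β) := EquivLike.injective φ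
      rw [ca_loc_map H φ a b, Finset.sum_image (fun x _ y _ h => hinj h)]
    rw [← hsum]
    exact hc _ _ (fun h => hab (φ.toEquiv.injective h))
  have key3 : (Fintype.card (H ≃g H) : ℝ) ≤
      ((locatingFinset H a b).card : ℝ) * ∑ φ : H ≃g H, g (φ a) := by
    calc (Fintype.card (H ≃g H) : ℝ) = ∑ _φ : H ≃g H, (1 : ℝ) := by simp
      _ ≤ ∑ φ : H ≃g H, ∑ v ∈ locatingFinset H a b, g (φ v) :=
          Finset.sum_le_sum (fun φ _ => key1 φ)
      _ = ∑ v ∈ locatingFinset H a b, ∑ φ : H ≃g H, g (φ v) := Finset.sum_comm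
      _ = ∑ _v ∈ locatingFinset H a b, ∑ φ : H ≃g H, g (φ a) :=
          Finset.sum_congr rfl (fun v _ => key2 v a)
      _ = ((locatingFinset H a b).card : ℝ) * ∑ φ : H ≃g H, g (φ a) := by
          rw [Finset.sum_const, nsmul_eq_mul]
  have key4 : (Fintype.card β : ℝ) * ∑ φ : H ≃g H, g (φ a) =
      (Fintype.card (H ≃g H) : ℝ) * ∑ v, g v := by
    calc (Fintype.card β : ℝ) * ∑ φ : H ≃g H, g (φ a)
        = ∑ _v : β, ∑ φ : H ≃g H, g (φ a) := by
          rw [Finset.sum_const, Finset.card_univ, nsmul_eq_mul]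
      _ = ∑ v : β, ∑ φ : H ≃g H, g (φ v) := Finset.sum_congr rfl (fun v _ => (key2 v a).symm)
      _ = ∑ φ : H ≃g H, ∑ v : β, g (φ v) := Finset.sum_comm
      _ = ∑ _φ : H ≃g H, ∑ v : β, g v :=
          Finset.sum_congr rfl
            (fun φ _ => Fintype.sum_equiv φ.toEquiv (fun v => g (φ v)) g (fun v => rfl))
      _ = (Fintype.card (H ≃g H) : ℝ) * ∑ v, g v := by
          rw [Finset.sum_const, Finset.card_univ, nsmul_eq_mul]
  have hCnn : 0 ≤ ∑ φ : H ≃g H, g (φ a) := Finset.sum_nonneg (fun _ _ => h0 _)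
  have hspos' : (0 : ℝ) < ((locatingFinset H a b).card : ℝ) := by exact_mod_cast hspos
  have hApos' : (0 : ℝ) < (Fintype.card (H ≃g H) : ℝ) := by exact_mod_cast hApos
  rw [div_le_iff₀ hspos']
  have hmul : (Fintype.card (H ≃g H) : ℝ) * (Fintype.card β : ℝ) ≤
      (Fintype.card (H ≃g H) : ℝ) * ((∑ v, g v) * ((locatingFinset H a b).card : ℝ)) := by
    have h1 : (Fintype.card (H ≃g H) : ℝ) * (Fintype.card β : ℝ) ≤
        (((locatingFinset H a b).card : ℝ) * ∑ φ : H ≃g H, g (φ a)) * (Fintype.card β : ℝ) :=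
      mul_le_mul_of_nonneg_right key3 (by positivity)
    calc (Fintype.card (H ≃g H) : ℝ) * (Fintype.card β : ℝ)
        ≤ (((locatingFinset H a b).card : ℝ) * ∑ φ : H ≃g H, g (φ a)) *
            (Fintype.card β : ℝ) := h1
      _ = ((locatingFinset H a b).card : ℝ) *
            ((Fintype.card β : ℝ) * ∑ φ : H ≃g H, g (φ a)) := by ring
      _ = ((locatingFinset H a b).card : ℝ) *
            ((Fintype.card (H ≃g H) : ℝ) * ∑ v, g v) := by rw [key4]
      _ = (Fintype.card (H ≃g H) : ℝ) * ((∑ v, g v) * ((locatingFinset H a b).card : ℝ)) := by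
          ring
  exact le_of_mul_le_mul_left hmul hApos'

end CoronaAux3

section CoronaAux4

open SimpleGraph Sum
open scoped Classical

variable {α β : Type*} [Fintype α] [Fintype β] [DecidableEq β]
variable (G : SimpleGraph α) (H : SimpleGraph β) [DecidableRel H.Adj]

/-- The canonical embedding of `G` into the corona. -/
def caHom : G →g G.corona H where
  toFun := inl
  map_rel' := fun h => h

lemma ca_reach (hG : G.Connected) (x y : α ⊕ α × β) : (G.corona H).Reachable x y := by
  have hhub : ∀ z : α ⊕ α × β, ∃ i : α, (G.corona H).Reachable z (inl i) := by
    intro z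
    cases z with
    | inl i => exact ⟨i, SimpleGraph.Reachable.refl _⟩
    | inr p =>
      exact ⟨p.1, SimpleGraph.Adj.reachable (by exact rfl : (G.corona H).Adj (inr p) (inl p.1))⟩
  obtain ⟨i, hi⟩ := hhub x
  obtain ⟨j, hj⟩ := hhub y
  have hij : (G.corona H).Reachable (inl i) (inl j) := by
    obtain ⟨p⟩ := hG.preconnected i j
    exact ⟨p.map (caHom G H)⟩
  exact (hi.trans hij).trans hj.symm

end CoronaAux4




lemma ca_res_comm {V : Type*} (F : SimpleGraph V) [Fintype V] (x y : V) :
    resolvingFinset F x y = resolvingFinset F y x := by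
  unfold resolvingFinset
  ext z
  simp only [Finset.mem_filter, Finset.mem_univ, true_and]
  exact ne_comm

/-- For a connected graph `G` and a vertex-transitive graph `H`
(of degree `k`),
`dim_f(G ⊙ H) = |V(G)||V(H)| / (2k(H) - max{2λ(H), 2μ(H) - 2})`. -/
theorem stmt_7 {α β : Type*} [Fintype α] [Fintype β] [DecidableEq β]
    (G : SimpleGraph α) (H : SimpleGraph β) [DecidableRel H.Adj]
    (hG : G.Connected) (hca : 2 ≤ Fintype.card α) (hcb : 2 ≤ Fintype.card β)
    (hvt : IsVertexTransitive H) (k : ℕ) (hreg : H.IsRegularOfDegree k) :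
    fracMetricDim (G.corona H) =
      ((Fintype.card α : ℝ) * (Fintype.card β : ℝ)) /
        ((2 * (k : ℤ) - max (2 * lambdaMax H) (2 * muMax H - 2) : ℤ) : ℝ) := by
  classical
  obtain ⟨a, b, hab, hmin, hval⟩ := ca_min_pair H hcb k hreg
  set s : ℕ := (locatingFinset H a b).card with hs
  have hs2 : 2 ≤ s := by
    calc 2 = ({a, b} : Finset β).card := (Finset.card_pair hab).symm
      _ ≤ s := Finset.card_le_card Finset.subset_union_left
  have hsn : s ≤ Fintype.card β := by
    simpa using Finset.card_le_univ (locatingFinset H a b)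
  have hspos : (0 : ℝ) < (s : ℝ) := by exact_mod_cast (by omega : 0 < s)
  have hden : ((2 * (k : ℤ) - max (2 * lambdaMax H) (2 * muMax H - 2) : ℤ) : ℝ) = (s : ℝ) := by
    rw [← hval]
    norm_cast
  rw [hden]
  -- the optimal resolving function of the corona
  set gh : α ⊕ α × β → ℝ := Sum.elim (fun _ => (0 : ℝ)) (fun _ => (s : ℝ)⁻¹) with hgh
  have hgnn : ∀ z, 0 ≤ gh z := by
    rintro (i | p) <;> simp [hgh] <;> positivity
  have hembinj : ∀ i : α, Function.Injective (fun v : β => (Sum.inr (i, v) : α ⊕ α × β)) := by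
    intro i a' b' h
    simpa using h
  have hsumcopy : ∀ i : α,
      ∑ z ∈ (univ : Finset β).map ⟨fun v => (Sum.inr (i, v) : α ⊕ α × β), hembinj i⟩, gh z =
        (Fintype.card β : ℝ) * (s : ℝ)⁻¹ := by
    intro i
    rw [Finset.sum_map]
    simp only [Function.Embedding.coeFn_mk, hgh, Sum.elim_inr]
    rw [Finset.sum_const, Finset.card_univ, nsmul_eq_mul]
  have h1copy : (1 : ℝ) ≤ (Fintype.card β : ℝ) * (s : ℝ)⁻¹ := by
    rw [← div_eq_mul_inv]
    rw [le_div_iff₀ hspos, one_mul]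
    exact_mod_cast hsn
  have hreach : ∀ x y : α ⊕ α × β, (G.corona H).Reachable x y := ca_reach G H hG
  have hfin : ∀ x y : α ⊕ α × β, (G.corona H).edist x y ≠ ⊤ :=
    fun x y => SimpleGraph.edist_ne_top_iff_reachable.mpr (hreach x y)
  -- generic tool : if all vertices of a copy resolve x and y, the constraint holds
  have hmono : ∀ (F : Finset (α ⊕ α × β)) (x y : α ⊕ α × β),
      F ⊆ resolvingFinset (G.corona H) x y → (1 : ℝ) ≤ ∑ z ∈ F, gh z →
      (1 : ℝ) ≤ ∑ z ∈ resolvingFinset (G.corona H) x y, gh z := by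
    intro F x y hsub hF
    exact hF.trans (Finset.sum_le_sum_of_subset_of_nonneg hsub (fun z _ _ => hgnn z))
  have hcopy_case : ∀ (m : α) (x y : α ⊕ α × β),
      (∀ w : β, (G.corona H).edist x (Sum.inr (m, w)) ≠ (G.corona H).edist y (Sum.inr (m, w))) →
      (1 : ℝ) ≤ ∑ z ∈ resolvingFinset (G.corona H) x y, gh z := by
    intro m x y hne
    apply hmono ((univ : Finset β).map ⟨fun v => (Sum.inr (m, v) : α ⊕ α × β), hembinj m⟩)
    · intro z hz
      simp only [Finset.mem_map, Finset.mem_univ, true_and,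
        Function.Embedding.coeFn_mk] at hz
      obtain ⟨w, rfl⟩ := hz
      simp only [resolvingFinset, Finset.mem_filter, Finset.mem_univ, true_and]
      exact hne w
    · rw [hsumcopy m]
      exact h1copy
  -- the three basic constraint shapes
  have hLL : ∀ i j : α, i ≠ j →
      (1 : ℝ) ≤ ∑ z ∈ resolvingFinset (G.corona H) (Sum.inl i) (Sum.inl j), gh z := by
    intro i j hij
    apply hcopy_case i
    intro w
    rw [edist_hub, edist_inr G H i w _ (by simp)]
    intro h
    have h' : (0 : ℕ∞) + 1 = (G.corona H).edist (Sum.inl j) (Sum.inl i) + 1 := by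
      rw [zero_add]; exact h
    have h0 := WithTop.add_right_cancel (by simp : (1 : ℕ∞) ≠ ⊤) h'
    have h1 : (Sum.inl j : α ⊕ α × β) = Sum.inl i := SimpleGraph.edist_eq_zero_iff.mp h0.symm
    simp only [Sum.inl.injEq] at h1
    exact hij h1.symm
  have hLR : ∀ (i : α) (p : α × β),
      (1 : ℝ) ≤ ∑ z ∈ resolvingFinset (G.corona H) (Sum.inl i) (Sum.inr p), gh z := by
    rintro i ⟨j, v⟩
    by_cases hij : i = j
    · subst hij
      haveI : Nontrivial α := Fintype.one_lt_card_iff_nontrivial.mp (by omega)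
      obtain ⟨m, hm⟩ := exists_ne i
      apply hcopy_case m
      intro w
      have hd2 : (G.corona H).edist (Sum.inr (i, v)) (Sum.inr (m, w)) =
          (G.corona H).edist (Sum.inl i) (Sum.inr (m, w)) + 1 := by
        rw [SimpleGraph.edist_comm,
          edist_inr G H i v _ (by simp [Prod.ext_iff]; intro hc; exact absurd hc hm),
          SimpleGraph.edist_comm]
      rw [hd2]
      intro h
      have h' : (G.corona H).edist (Sum.inl i) (Sum.inr (m, w)) + 0 =
          (G.corona H).edist (Sum.inl i) (Sum.inr (m, w)) + 1 := by
        rw [add_zero]; exact h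
      have := WithTop.add_left_cancel (hfin _ _) h'
      exact absurd (this : (0 : ℕ∞) = 1) (zero_ne_one (α := ℕ∞))
    · apply hcopy_case i
      intro w
      rw [edist_hub, SimpleGraph.edist_comm,
        edist_inr G H j v _ (by simp [Prod.ext_iff]; intro hc; exact absurd hc hij)]
      intro h
      have h' : (0 : ℕ∞) + 1 = (G.corona H).edist (Sum.inr (i, w)) (Sum.inl j) + 1 := by
        rw [zero_add]; exact h
      have h0 := WithTop.add_right_cancel (by simp : (1 : ℕ∞) ≠ ⊤) h'
      replace h0 : (G.corona H).edist (Sum.inr (i, w)) (Sum.inl j) = 0 := h0.symm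
      rw [SimpleGraph.edist_eq_zero_iff] at h0
      simp at h0
  have hRR : ∀ (p q : α × β), p ≠ q →
      (1 : ℝ) ≤ ∑ z ∈ resolvingFinset (G.corona H) (Sum.inr p) (Sum.inr q), gh z := by
    rintro ⟨i, u⟩ ⟨j, v⟩ hpq
    by_cases hij : i = j
    · subst hij
      have huv : u ≠ v := by
        intro hc
        exact hpq (by rw [hc])
      rw [resolving_eq_locating G H i huv, Finset.sum_map]
      simp only [Function.Embedding.coeFn_mk, hgh, Sum.elim_inr]
      show (1 : ℝ) ≤ ∑ x ∈ locatingFinset H u v, (s : ℝ)⁻¹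
      rw [Finset.sum_const, nsmul_eq_mul]
      have hsc : (s : ℝ) ≤ ((locatingFinset H u v).card : ℝ) := by
        exact_mod_cast hmin u v huv
      calc (1 : ℝ) = (s : ℝ) * (s : ℝ)⁻¹ := by
            rw [mul_inv_cancel₀ (ne_of_gt hspos)]
        _ ≤ ((locatingFinset H u v).card : ℝ) * (s : ℝ)⁻¹ := by
            apply mul_le_mul_of_nonneg_right hsc
            positivity
    · apply hcopy_case i
      intro w
      have hd1 : (G.corona H).edist (Sum.inr (i, u)) (Sum.inr (i, w)) ≤ 2 := by
        calc (G.corona H).edist (Sum.inr (i, u)) (Sum.inr (i, w)) ≤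
            (G.corona H).edist (Sum.inr (i, u)) (Sum.inl i) +
              (G.corona H).edist (Sum.inl i) (Sum.inr (i, w)) := SimpleGraph.edist_triangle
          _ = 2 := by rw [edist_hub', edist_hub]; rfl
      have hd2 : (3 : ℕ∞) ≤ (G.corona H).edist (Sum.inr (j, v)) (Sum.inr (i, w)) := by
        rw [SimpleGraph.edist_comm,
          edist_inr G H j v _ (by simp [Prod.ext_iff]; intro hc; exact absurd hc hij)]
        have h2 : (2 : ℕ∞) ≤ (G.corona H).edist (Sum.inr (i, w)) (Sum.inl j) := by
          apply two_le_enat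
          · rw [Ne, SimpleGraph.edist_eq_zero_iff]
            simp
          · rw [Ne, SimpleGraph.edist_eq_one_iff_adj, corona_adj_inr_inl]
            simpa using hij
        calc (3 : ℕ∞) = 2 + 1 := by rfl
          _ ≤ _ + 1 := add_le_add h2 le_rfl
      intro h
      rw [h] at hd1
      have : (3 : ℕ∞) ≤ 2 := le_trans hd2 hd1
      exact absurd this (by decide)
  have hconstr : ∀ x y : α ⊕ α × β, x ≠ y →
      (1 : ℝ) ≤ ∑ z ∈ resolvingFinset (G.corona H) x y, gh z := by
    intro x y hxy
    rcases x with i | p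
    · rcases y with j | q
      · exact hLL i j (by simpa using hxy)
      · exact hLR i q
    · rcases y with j | q
      · rw [ca_res_comm]
        exact hLR j p
      · exact hRR p q (by simpa using hxy)
  have hbounds : ∀ z, gh z ∈ Set.Icc (0 : ℝ) 1 := by
    rintro (i | p)
    · simp [hgh]
    · simp only [hgh, Sum.elim_inr]
      constructor
      · positivity
      · rw [inv_le_one₀ hspos]
        exact_mod_cast (by omega : 1 ≤ s)
  have hres : IsResolvingFn (G.corona H) gh := ⟨hbounds, hconstr⟩
  have hsumgh : ∑ z, gh z = (Fintype.card α : ℝ) * (Fintype.card β : ℝ) / (s : ℝ) := by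
    rw [Fintype.sum_sum_type]
    simp only [hgh, Sum.elim_inl, Sum.elim_inr]
    rw [Finset.sum_const, Finset.sum_const, Finset.card_univ, Finset.card_univ,
      Fintype.card_prod, nsmul_eq_mul, nsmul_eq_mul, div_eq_mul_inv]
    push_cast
    ring
  have hmem : (Fintype.card α : ℝ) * (Fintype.card β : ℝ) / (s : ℝ) ∈
      {w | ∃ g, IsResolvingFn (G.corona H) g ∧ w = ∑ v, g v} :=
    ⟨gh, hres, hsumgh.symm⟩
  have hlower : ∀ w ∈ {w | ∃ g, IsResolvingFn (G.corona H) g ∧ w = ∑ v, g v},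
      (Fintype.card α : ℝ) * (Fintype.card β : ℝ) / (s : ℝ) ≤ w := by
    rintro w ⟨g, ⟨hg01, hgcon⟩, rfl⟩
    have hcopy : ∀ i : α,
        (Fintype.card β : ℝ) / (s : ℝ) ≤ ∑ v : β, g (Sum.inr (i, v)) := by
      intro i
      refine ca_avg H hvt hab hmin _ (fun v => (hg01 _).1) ?_
      intro v1 v2 hv
      have h1 := hgcon (Sum.inr (i, v1)) (Sum.inr (i, v2)) (by simp [hv])
      rw [resolving_eq_locating G H i hv, Finset.sum_map] at h1
      exact h1
    calc (Fintype.card α : ℝ) * (Fintype.card β : ℝ) / (s : ℝ)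
        = ∑ _i : α, (Fintype.card β : ℝ) / (s : ℝ) := by
          rw [Finset.sum_const, Finset.card_univ, nsmul_eq_mul, mul_div_assoc]
      _ ≤ ∑ i : α, ∑ v : β, g (Sum.inr (i, v)) := Finset.sum_le_sum (fun i _ => hcopy i)
      _ = ∑ p : α × β, g (Sum.inr p) := (Fintype.sum_prod_type (fun p : α × β => g (Sum.inr p))).symm
      _ ≤ ∑ z, g z := by
          rw [Fintype.sum_sum_type]
          have h0 : (0 : ℝ) ≤ ∑ i : α, g (Sum.inl i) :=
            Finset.sum_nonneg (fun i _ => (hg01 _).1)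
          linarith
  apply le_antisymm
  · exact csInf_le ⟨0, by
      rintro w ⟨g, hg, rfl⟩
      exact Finset.sum_nonneg (fun v _ => (hg.1 v).1)⟩ hmem
  · exact le_csInf ⟨_, hmem⟩ hlower
end

section
/- Let H be a graph. Then l_f(H) ≤ dim_f(K1⊙H) ≤ l_f(H) + 1, where K1⊙H is the corona product of the one-vertex graph K1 with H. -/
open Finset

variable {α β V : Type*}

section Aux

variable {β : Type*} [Fintype β] [DecidableEq β] (H : SimpleGraph β) [DecidableRel H.Adj]

private lemma cor_adj_inr_inr (p q : Unit × β) :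
    ((⊥ : SimpleGraph Unit).corona H).Adj (Sum.inr p) (Sum.inr q) ↔ H.Adj p.2 q.2 := by
  show p.1 = q.1 ∧ H.Adj p.2 q.2 ↔ _
  simp

private lemma cor_adj_inl_inr (u : Unit) (q : Unit × β) :
    ((⊥ : SimpleGraph Unit).corona H).Adj (Sum.inl u) (Sum.inr q) := by
  show u = q.1
  exact Subsingleton.elim _ _

private lemma cor_adj_inr_inl (u : Unit) (q : Unit × β) :
    ((⊥ : SimpleGraph Unit).corona H).Adj (Sum.inr q) (Sum.inl u) :=
  (cor_adj_inl_inr H u q).symm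

open scoped Classical in
private lemma cor_edist (x y : Unit ⊕ Unit × β) :
    ((⊥ : SimpleGraph Unit).corona H).edist x y =
      if x = y then 0 else if ((⊥ : SimpleGraph Unit).corona H).Adj x y then 1 else 2 := by
  set F := (⊥ : SimpleGraph Unit).corona H with hF
  split_ifs with h1 h2
  · subst h1; exact SimpleGraph.edist_self
  · exact SimpleGraph.edist_eq_one_iff_adj.mpr h2
  · have hle : F.edist x y ≤ 2 := by
      rcases x with u | p <;> rcases y with v | q
      · exact absurd (by rfl : (Sum.inl u : Unit ⊕ Unit × β) = Sum.inl v) h1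
      · exact absurd (cor_adj_inl_inr H u q) h2
      · exact absurd (cor_adj_inr_inl H v p) h2
      · calc F.edist (Sum.inr p) (Sum.inr q)
            ≤ F.edist (Sum.inr p) (Sum.inl ()) + F.edist (Sum.inl ()) (Sum.inr q) :=
              SimpleGraph.edist_triangle
          _ ≤ 1 + 1 := by
              gcongr
              · exact le_of_eq (SimpleGraph.edist_eq_one_iff_adj.mpr (cor_adj_inr_inl H () p))
              · exact le_of_eq (SimpleGraph.edist_eq_one_iff_adj.mpr (cor_adj_inl_inr H () q))
          _ = 2 := by norm_num
    have h0 : F.edist x y ≠ 0 := fun h => h1 (SimpleGraph.edist_eq_zero_iff.mp h)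
    have h1' : F.edist x y ≠ 1 := fun h => h2 (SimpleGraph.edist_eq_one_iff_adj.mp h)
    have hne : F.edist x y ≠ ⊤ := fun ht => by rw [ht] at hle; exact absurd hle (by simp)
    lift F.edist x y to ℕ using hne with n hn
    have hle' : n ≤ 2 := by exact_mod_cast hle
    have h0' : n ≠ 0 := by exact_mod_cast h0
    have h1'' : n ≠ 1 := by exact_mod_cast h1'
    have : n = 2 := by omega
    exact_mod_cast congrArg (Nat.cast : ℕ → ℕ∞) this

open scoped Classical in
private lemma mem_R {x y : Unit ⊕ Unit × β} (hxy : x ≠ y) (z : Unit ⊕ Unit × β) :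
    z ∈ resolvingFinset ((⊥ : SimpleGraph Unit).corona H) x y ↔
      z = x ∨ z = y ∨
        ¬(((⊥ : SimpleGraph Unit).corona H).Adj x z ↔
          ((⊥ : SimpleGraph Unit).corona H).Adj y z) := by
  classical
  have e01 : (0 : ℕ∞) ≠ 1 := by decide
  have e02 : (0 : ℕ∞) ≠ 2 := by decide
  have e12 : (1 : ℕ∞) ≠ 2 := by decide
  have e10 : (1 : ℕ∞) ≠ 0 := by decide
  have e20 : (2 : ℕ∞) ≠ 0 := by decide
  have e21 : (2 : ℕ∞) ≠ 1 := by decide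
  simp only [resolvingFinset, mem_filter, mem_univ, true_and]
  rw [cor_edist, cor_edist]
  split_ifs with h1 h2 h3 h4 h5 h6 h7 h8 <;> simp_all [eq_comm]

private lemma inr_injective : Function.Injective (fun v : β => (Sum.inr ((), v) : Unit ⊕ Unit × β)) := by
  intro a b h
  simpa using h

private lemma R_inr {p q : β} (hpq : p ≠ q) :
    resolvingFinset ((⊥ : SimpleGraph Unit).corona H) (Sum.inr ((), p)) (Sum.inr ((), q)) =
      (locatingFinset H p q).image (fun v => (Sum.inr ((), v) : Unit ⊕ Unit × β)) := by
  ext z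
  rw [mem_R H (by simp [hpq])]
  rcases z with u | ⟨⟨⟩, v⟩
  · simp only [Finset.mem_image]
    constructor
    · rintro (h | h | h)
      · exact absurd h (by simp)
      · exact absurd h (by simp)
      · exact absurd (iff_of_true (cor_adj_inr_inl H u _) (cor_adj_inr_inl H u _)) h
    · rintro ⟨v, _, h⟩; exact absurd h (by simp)
  · simp only [Finset.mem_image, cor_adj_inr_inr, locatingFinset, Finset.mem_union,
      Finset.mem_insert, Finset.mem_singleton, Finset.mem_symmDiff,
      SimpleGraph.mem_neighborFinset, Sum.inr.injEq, Prod.mk.injEq, true_and]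
    constructor
    · rintro (h | h | h)
      · exact ⟨v, Or.inl (Or.inl h), rfl⟩
      · exact ⟨v, Or.inl (Or.inr h), rfl⟩
      · refine ⟨v, Or.inr ?_, rfl⟩
        tauto
    · rintro ⟨w, hw, rfl⟩
      rcases hw with (h | h) | h
      · exact Or.inl h
      · exact Or.inr (Or.inl h)
      · exact Or.inr (Or.inr (by tauto))

end Aux
/-- For any graph `H`, `l_f(H) ≤ dim_f(K₁ ⊙ H) ≤ l_f(H) + 1`. -/
theorem stmt_8 {β : Type*} [Fintype β] [DecidableEq β]
    (H : SimpleGraph β) [DecidableRel H.Adj] (hcb : 2 ≤ Fintype.card β) :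
    fracLoc H ≤ fracMetricDim ((⊥ : SimpleGraph Unit).corona H) ∧
      fracMetricDim ((⊥ : SimpleGraph Unit).corona H) ≤ fracLoc H + 1 := by
  classical
  set F := (⊥ : SimpleGraph Unit).corona H with hF
  set A := {w : ℝ | ∃ g, IsLocatingFn H g ∧ w = ∑ v, g v} with hA
  set B := {w : ℝ | ∃ g, IsResolvingFn F g ∧ w = ∑ v, g v} with hB
  have hL : fracLoc H = sInf A := rfl
  have hM : fracMetricDim F = sInf B := rfl
  have hAbdd : BddBelow A := by
    refine ⟨0, ?_⟩
    rintro w ⟨g, ⟨hbnd, -⟩, rfl⟩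
    exact Finset.sum_nonneg fun v _ => (hbnd v).1
  have hBbdd : BddBelow B := by
    refine ⟨0, ?_⟩
    rintro w ⟨g, ⟨hbnd, -⟩, rfl⟩
    exact Finset.sum_nonneg fun v _ => (hbnd v).1
  have hxne : ∀ {v1 v2 : β}, v1 ≠ v2 →
      (Sum.inr ((), v1) : Unit ⊕ Unit × β) ≠ Sum.inr ((), v2) := by
    intro v1 v2 h hc
    exact h (by simpa using hc)
  have hAne : A.Nonempty := by
    refine ⟨∑ v : β, (1 : ℝ), fun _ => 1, ⟨fun v => by norm_num, fun v1 v2 h => ?_⟩, rfl⟩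
    rw [Finset.sum_const, nsmul_eq_mul, mul_one]
    have : v1 ∈ locatingFinset H v1 v2 := by simp [locatingFinset]
    exact_mod_cast Nat.one_le_cast.mpr (Finset.card_pos.mpr ⟨v1, this⟩)
  have hBne : B.Nonempty := by
    refine ⟨∑ z : Unit ⊕ Unit × β, (1 : ℝ), fun _ => 1,
      ⟨fun v => by norm_num, fun x y h => ?_⟩, rfl⟩
    rw [Finset.sum_const, nsmul_eq_mul, mul_one]
    have : x ∈ resolvingFinset F x y := (mem_R H h x).mpr (Or.inl rfl)
    exact_mod_cast Nat.one_le_cast.mpr (Finset.card_pos.mpr ⟨x, this⟩)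
  constructor
  · -- fracLoc H ≤ fracMetricDim F
    rw [hL, hM]
    refine le_csInf hBne ?_
    rintro w ⟨g, ⟨hbnd, hres⟩, rfl⟩
    have hinj : ∀ a ∈ (univ : Finset β), ∀ b ∈ (univ : Finset β),
        (Sum.inr ((), a) : Unit ⊕ Unit × β) = Sum.inr ((), b) → a = b :=
      fun a _ b _ h => inr_injective h
    have hloc : IsLocatingFn H (fun v => g (Sum.inr ((), v))) := by
      refine ⟨fun v => hbnd _, fun v1 v2 h12 => ?_⟩
      have h1 := hres _ _ (hxne h12)
      rw [R_inr H h12, Finset.sum_image (fun a _ b _ h => inr_injective h)] at h1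
      exact h1
    have hle1 : sInf A ≤ ∑ v : β, g (Sum.inr ((), v)) :=
      csInf_le hAbdd ⟨_, hloc, rfl⟩
    have hle2 : ∑ v : β, g (Sum.inr ((), v)) ≤ ∑ z : Unit ⊕ Unit × β, g z := by
      rw [show ∑ v : β, g (Sum.inr ((), v)) =
          ∑ z ∈ (univ : Finset β).image (fun v => (Sum.inr ((), v) : Unit ⊕ Unit × β)), g z from
        (Finset.sum_image (fun a _ b _ h => inr_injective h)).symm]
      exact Finset.sum_le_sum_of_subset_of_nonneg (Finset.subset_univ _)
        (fun z _ _ => (hbnd z).1)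
    linarith
  · -- fracMetricDim F ≤ fracLoc H + 1
    rw [hL, hM]
    have key : ∀ w ∈ A, sInf B ≤ w + 1 := by
      rintro w ⟨g, ⟨hbnd, hloc⟩, rfl⟩
      set g' : Unit ⊕ Unit × β → ℝ := Sum.elim (fun _ => 1) (fun p => g p.2) with hg'
      have hres : IsResolvingFn F g' := by
        constructor
        · rintro (u | p)
          · exact ⟨zero_le_one, le_refl 1⟩
          · exact hbnd p.2
        · rintro (u | ⟨⟨⟩, a⟩) (v | ⟨⟨⟩, b⟩) hxy
          · exact absurd (congrArg Sum.inl (Subsingleton.elim u v)) hxy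
          · have hm : Sum.inl u ∈ resolvingFinset F (Sum.inl u) (Sum.inr ((), b)) :=
              (mem_R H hxy _).mpr (Or.inl rfl)
            calc (1 : ℝ) = g' (Sum.inl u) := rfl
              _ ≤ _ := Finset.single_le_sum (f := g')
                  (fun z _ => by rcases z with u' | p' <;> simp [hg', (hbnd _).1]) hm
          · have hm : Sum.inl v ∈ resolvingFinset F (Sum.inr ((), a)) (Sum.inl v) :=
              (mem_R H hxy _).mpr (Or.inr (Or.inl rfl))
            calc (1 : ℝ) = g' (Sum.inl v) := rfl
              _ ≤ _ := Finset.single_le_sum (f := g')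
                  (fun z _ => by rcases z with u' | p' <;> simp [hg', (hbnd _).1]) hm
          · have hab : a ≠ b := fun h => hxy (by rw [h])
            have := hloc a b hab
            rw [R_inr H hab, Finset.sum_image (fun a _ b _ h => inr_injective h)]
            simpa [hg'] using this
      have hw : ∑ z : Unit ⊕ Unit × β, g' z = (∑ v : β, g v) + 1 := by
        rw [Fintype.sum_sum_type]
        have e1 : ∑ u : Unit, g' (Sum.inl u) = 1 := by simp [hg']
        have e2 : ∑ p : Unit × β, g' (Sum.inr p) = ∑ v : β, g v := by
          rw [Fintype.sum_prod_type]
          simp [hg']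
        rw [e1, e2, add_comm]
      have := csInf_le hBbdd (⟨g', hres, rfl⟩ : (∑ z : Unit ⊕ Unit × β, g' z) ∈ B)
      linarith [this, hw.le, hw.ge]
    have h2 : sInf B - 1 ≤ sInf A :=
      le_csInf hAne fun w hw => by linarith [key w hw]
    linarith
end

section
/- Let G be a connected graph and H a graph. If (u1,v1) and (u2,v2) are distinct vertices of the lexicographic product G[H] with u1 not equivalent to u2 (i.e., u1 ≠ u2 and u1, u2 are not twins in G), then there exists a vertex u of G such that {(u,v) : v ∈ V(H)} ⊆ R_{G[H]}{(u1,v1),(u2,v2)}. -/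
open Finset

variable {α β V : Type*}

private lemma lex_key {α β : Type*} [Fintype α] [Fintype β]
    (G : SimpleGraph α) (H : SimpleGraph β) {a b w : α}
    (hadj : G.Adj a w) (hnadj : ¬G.Adj b w) (hne : w ≠ b) (v1 v2 v : β) :
    (G.lexProd H).edist (a, v1) (w, v) ≠ (G.lexProd H).edist (b, v2) (w, v) := by
  have e1 : (G.lexProd H).edist (a, v1) (w, v) = 1 :=
    SimpleGraph.edist_eq_one_iff_adj.mpr (Or.inl hadj)
  have e2 : (G.lexProd H).edist (b, v2) (w, v) ≠ 1 := by
    intro h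
    rcases SimpleGraph.edist_eq_one_iff_adj.mp h with h' | ⟨he, _⟩
    · exact hnadj h'
    · exact hne he.symm
  rw [e1]
  exact fun h => e2 h.symm

/-- If `(u₁,v₁)` and `(u₂,v₂)` are vertices of `G[H]` with `u₁ ≠ u₂`
not twins in `G`, then some fibre `{u} × V(H)` is entirely contained in
`R_{G[H]}{(u₁,v₁),(u₂,v₂)}`. -/
theorem stmt_12 {α β : Type*} [Fintype α] [Fintype β]
    (G : SimpleGraph α) (H : SimpleGraph β)
    (hG : G.Connected) (hca : 2 ≤ Fintype.card α) (hcb : 2 ≤ Fintype.card β)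
    (u1 u2 : α) (v1 v2 : β) (h1 : u1 ≠ u2) (h2 : ¬G.Twins u1 u2) :
    ∃ u : α, ∀ v : β,
      (u, v) ∈ resolvingFinset (G.lexProd H) (u1, v1) (u2, v2) := by
  
  classical
  -- From `¬ Twins`, both the closed and the open neighbourhoods differ.
  rw [SimpleGraph.Twins, not_and_or] at h2
  rcases h2 with h2 | h2
  · exact absurd h1 h2
  push_neg at h2
  obtain ⟨hcl, hop⟩ := h2
  -- the open neighbourhoods differ at some vertex u
  have : ∃ u, (G.Adj u1 u ∧ ¬G.Adj u2 u) ∨ (G.Adj u2 u ∧ ¬G.Adj u1 u) := by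
    by_contra h
    push_neg at h
    apply hop
    ext x
    constructor
    · intro hx
      by_contra hx2
      exact hx2 ((h x).1 hx)
    · intro hx
      by_contra hx2
      exact hx2 ((h x).2 hx)
  obtain ⟨u, hu⟩ := this
  have key : ∃ w, (G.Adj u1 w ∧ ¬G.Adj u2 w ∧ w ≠ u2) ∨
      (G.Adj u2 w ∧ ¬G.Adj u1 w ∧ w ≠ u1) := by
    by_cases hadj : G.Adj u1 u2
    · -- use the closed neighbourhoods
      have : ∃ w, (w = u1 ∨ G.Adj u1 w) ≠ (w = u2 ∨ G.Adj u2 w) := by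
        by_contra h
        push_neg at h
        apply hcl
        ext x
        simp only [Set.mem_insert_iff, SimpleGraph.mem_neighborSet]
        exact iff_of_eq (h x)
      obtain ⟨w, hw⟩ := this
      rcases Classical.em (w = u1 ∨ G.Adj u1 w) with hw1 | hw1
      · have hw2 : ¬(w = u2 ∨ G.Adj u2 w) := fun h => hw (by simp [hw1, h])
        push_neg at hw2
        refine ⟨w, Or.inl ⟨?_, hw2.2, hw2.1⟩⟩
        rcases hw1 with rfl | h
        · exact absurd hadj.symm hw2.2
        · exact h
      · have hw2 : w = u2 ∨ G.Adj u2 w := by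
          by_contra h
          exact hw (by simp [hw1, h])
        push_neg at hw1
        refine ⟨w, Or.inr ⟨?_, hw1.2, hw1.1⟩⟩
        rcases hw2 with rfl | h
        · exact absurd hadj hw1.2
        · exact h
    · -- u1, u2 not adjacent: u itself works
      rcases hu with ⟨ha, hb⟩ | ⟨ha, hb⟩
      · refine ⟨u, Or.inl ⟨ha, hb, ?_⟩⟩
        rintro rfl
        exact hadj ha
      · refine ⟨u, Or.inr ⟨ha, hb, ?_⟩⟩
        rintro rfl
        exact hadj ha.symm
  obtain ⟨w, hw | hw⟩ := key
  · refine ⟨w, fun v => ?_⟩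
    simp only [resolvingFinset, mem_filter, mem_univ, true_and]
    exact lex_key G H hw.1 hw.2.1 hw.2.2 v1 v2 v
  · refine ⟨w, fun v => ?_⟩
    simp only [resolvingFinset, mem_filter, mem_univ, true_and]
    exact fun h => lex_key G H hw.1 hw.2.1 hw.2.2 v2 v1 v h.symm
end

section
/- Let G be a connected graph and H a graph. If f̄ is a resolving function of the lexicographic product G[H], then for every vertex u of G the function f̄_u : V(H) → [0,1] defined by f̄_u(v) = f̄((u,v)) is a locating function of H. Consequently, dim_f(G[H]) ≥ |V(G)| · l_f(H). -/
open Finset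

variable {α β V : Type*}

section Aux

variable {α β : Type*} (G : SimpleGraph α) (H : SimpleGraph β)

/-- Any walk in the lexicographic product projects to a walk in `G` of at most the
same length. -/
lemma lexProd_walk_proj {x y : α × β} (p : (G.lexProd H).Walk x y) :
    ∃ q : G.Walk x.1 y.1, q.length ≤ p.length := by
  induction p with
  | nil => exact ⟨.nil, le_refl _⟩
  | cons h p ih =>
    obtain ⟨q, hq⟩ := ih
    rcases h with hg | ⟨heq, _⟩
    · exact ⟨.cons hg q, by show q.length + 1 ≤ p.length + 1; omega⟩
    · exact ⟨q.copy heq.symm rfl, by rw [SimpleGraph.Walk.length_copy]; show q.length ≤ p.length + 1; omega⟩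

/-- A walk in `G` lifts to a walk in the lexicographic product with constant second
coordinate. -/
lemma lexProd_walk_lift {a b : α} (p : G.Walk a b) (y : β) :
    ∃ q : (G.lexProd H).Walk (a, y) (b, y), q.length = p.length := by
  induction p with
  | nil => exact ⟨.nil, rfl⟩
  | cons h p ih =>
    obtain ⟨q, hq⟩ := ih
    exact ⟨.cons (Or.inl h) q, by show q.length + 1 = p.length + 1; rw [hq]⟩

/-- Across fibres, the distance in the lexicographic product equals the distance in `G`. -/
lemma lexProd_edist_of_ne (hG : G.Connected) {u w : α} (hne : u ≠ w) (v x : β) :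
    (G.lexProd H).edist (u, v) (w, x) = G.edist u w := by
  refine le_antisymm ?_ ?_
  · -- upper bound: lift a geodesic of `G`
    obtain ⟨p, hp⟩ := hG.exists_walk_length_eq_edist u w
    cases p with
    | nil => exact absurd rfl hne
    | @cons _ c _ h q =>
      obtain ⟨r, hr⟩ := lexProd_walk_lift G H q x
      calc (G.lexProd H).edist (u, v) (w, x)
          ≤ ((SimpleGraph.Walk.cons (Or.inl h) r : (G.lexProd H).Walk (u, v) (w, x)).length : ℕ∞) :=
            SimpleGraph.edist_le _
        _ = G.edist u w := by rw [← hp]; show ((r.length + 1 : ℕ) : ℕ∞) = ((q.length + 1 : ℕ) : ℕ∞); rw [hr]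
  · -- lower bound: project any walk
    by_cases htop : (G.lexProd H).edist (u, v) (w, x) = ⊤
    · rw [htop]; exact le_top
    · obtain ⟨p, hp⟩ := SimpleGraph.exists_walk_of_edist_ne_top htop
      obtain ⟨q, hq⟩ := lexProd_walk_proj G H p
      calc G.edist u w ≤ (q.length : ℕ∞) := SimpleGraph.edist_le _
        _ ≤ (p.length : ℕ∞) := by exact_mod_cast hq
        _ = (G.lexProd H).edist (u, v) (w, x) := hp

/-- Within a fibre, nonadjacent distinct vertices are at distance 2. -/
lemma lexProd_edist_same_fiber [Fintype α] (hG : G.Connected) (hca : 2 ≤ Fintype.card α)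
    (u : α) {v x : β} (hvx : v ≠ x) (hadj : ¬H.Adj v x) :
    (G.lexProd H).edist (u, v) (u, x) = 2 := by
  -- find a neighbour of `u` in `G`
  obtain ⟨w, hw⟩ := Fintype.exists_ne_of_one_lt_card (by omega) u
  obtain ⟨p⟩ := hG u w
  have hnbr : ∃ u' : α, G.Adj u u' := by
    cases p with
    | nil => exact absurd rfl hw.symm
    | cons h q => exact ⟨_, h⟩
  obtain ⟨u', hu'⟩ := hnbr
  have hstep1 : (G.lexProd H).Adj (u, v) (u', v) := Or.inl hu'
  have hstep2 : (G.lexProd H).Adj (u', v) (u, x) := Or.inl hu'.symm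
  have hle : (G.lexProd H).edist (u, v) (u, x) ≤ 2 := by
    have := SimpleGraph.edist_le
      (SimpleGraph.Walk.cons hstep1 (SimpleGraph.Walk.cons hstep2 SimpleGraph.Walk.nil))
    simpa using this
  have h0 : (G.lexProd H).edist (u, v) (u, x) ≠ 0 := by
    intro h
    exact hvx (Prod.ext_iff.mp (SimpleGraph.edist_eq_zero_iff.mp h)).2
  have h1 : (G.lexProd H).edist (u, v) (u, x) ≠ 1 := by
    intro h
    rcases SimpleGraph.edist_eq_one_iff_adj.mp h with hg | ⟨-, hh⟩
    · exact G.irrefl hg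
    · exact hadj hh
  have hne_top : (G.lexProd H).edist (u, v) (u, x) ≠ ⊤ :=
    ne_top_of_le_ne_top (by simp) hle
  lift (G.lexProd H).edist (u, v) (u, x) to ℕ using hne_top with d hd
  have hle' : d ≤ 2 := by exact_mod_cast hle
  have h0' : d ≠ 0 := by exact_mod_cast h0
  have h1' : d ≠ 1 := by exact_mod_cast h1
  have : d = 2 := by omega
  exact_mod_cast this

end Aux

/-- If `f` is a resolving function of `G[H]`, then each fibre
restriction `v ↦ f (u, v)` is a locating function of `H`; consequently
`dim_f(G[H]) ≥ |V(G)| · l_f(H)`. -/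
theorem stmt_14 {α β : Type*} [Fintype α] [Fintype β] [DecidableEq β]
    (G : SimpleGraph α) (H : SimpleGraph β) [DecidableRel H.Adj]
    (hG : G.Connected) (hca : 2 ≤ Fintype.card α) (hcb : 2 ≤ Fintype.card β) :
    (∀ f : α × β → ℝ, IsResolvingFn (G.lexProd H) f →
      ∀ u : α, IsLocatingFn H fun v => f (u, v)) ∧
    (Fintype.card α : ℝ) * fracLoc H ≤ fracMetricDim (G.lexProd H) := by
  classical
  have main : ∀ f : α × β → ℝ, IsResolvingFn (G.lexProd H) f →
      ∀ u : α, IsLocatingFn H fun v => f (u, v) := by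
    rintro f ⟨hf01, hfres⟩ u
    refine ⟨fun v => hf01 (u, v), fun v1 v2 hne => ?_⟩
    have h1 : 1 ≤ ∑ z ∈ resolvingFinset (G.lexProd H) (u, v1) (u, v2), f z :=
      hfres _ _ (by simp [hne])
    have hsub : resolvingFinset (G.lexProd H) (u, v1) (u, v2) ⊆
        (locatingFinset H v1 v2).image (fun v => (u, v)) := by
      intro z hz
      obtain ⟨w, x⟩ := z
      rw [resolvingFinset, mem_filter] at hz
      have hzd := hz.2
      rw [mem_image]
      refine ⟨x, ?_, ?_⟩
      · -- x must be in the locating set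
        by_contra hxloc
        rw [locatingFinset, mem_union, mem_insert, mem_singleton,
          Finset.mem_symmDiff] at hxloc
        push_neg at hxloc
        obtain ⟨⟨hxv1, hxv2⟩, hsd⟩ := hxloc
        simp only [SimpleGraph.mem_neighborFinset] at hsd
        by_cases hwu : w = u
        · subst hwu
          by_cases ha1 : H.Adj v1 x
          · have ha2 : H.Adj v2 x := by tauto
            apply hzd
            rw [SimpleGraph.edist_eq_one_iff_adj.mpr (Or.inr ⟨rfl, ha1⟩),
              SimpleGraph.edist_eq_one_iff_adj.mpr (Or.inr ⟨rfl, ha2⟩)]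
          · have ha2 : ¬H.Adj v2 x := by tauto
            apply hzd
            rw [lexProd_edist_same_fiber G H hG hca w (Ne.symm hxv1) ha1,
              lexProd_edist_same_fiber G H hG hca w (Ne.symm hxv2) ha2]
        · apply hzd
          rw [lexProd_edist_of_ne G H hG (Ne.symm hwu) v1 x,
            lexProd_edist_of_ne G H hG (Ne.symm hwu) v2 x]
      · -- but then w = u
        by_cases hwu : w = u
        · rw [hwu]
        · exact absurd (by
            rw [lexProd_edist_of_ne G H hG (Ne.symm hwu) v1 x,
              lexProd_edist_of_ne G H hG (Ne.symm hwu) v2 x]) hzd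
    calc (1 : ℝ) ≤ ∑ z ∈ resolvingFinset (G.lexProd H) (u, v1) (u, v2), f z := h1
      _ ≤ ∑ z ∈ (locatingFinset H v1 v2).image (fun v => (u, v)), f z :=
          Finset.sum_le_sum_of_subset_of_nonneg hsub (fun z _ _ => (hf01 z).1)
      _ = ∑ v ∈ locatingFinset H v1 v2, f (u, v) :=
          Finset.sum_image (fun a _ b _ h => by simpa using h)
  refine ⟨main, ?_⟩
  -- second part
  have hbdd : BddBelow {w | ∃ g, IsLocatingFn H g ∧ w = ∑ v, g v} := by
    refine ⟨0, ?_⟩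
    rintro w ⟨g, ⟨hg01, -⟩, rfl⟩
    exact Finset.sum_nonneg fun v _ => (hg01 v).1
  have hne_set : {w | ∃ g, IsResolvingFn (G.lexProd H) g ∧ w = ∑ v, g v}.Nonempty := by
    refine ⟨∑ _v : α × β, (1 : ℝ), fun _ => 1, ⟨fun v => by norm_num, ?_⟩, rfl⟩
    intro x y hxy
    have hmem : x ∈ resolvingFinset (G.lexProd H) x y := by
      rw [resolvingFinset, mem_filter]
      refine ⟨mem_univ _, ?_⟩
      rw [SimpleGraph.edist_self]
      exact fun h => hxy (SimpleGraph.edist_eq_zero_iff.mp h.symm).symm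
    calc (1 : ℝ) = ∑ z ∈ ({x} : Finset (α × β)), (1 : ℝ) := by simp
      _ ≤ ∑ z ∈ resolvingFinset (G.lexProd H) x y, (1 : ℝ) :=
          Finset.sum_le_sum_of_subset_of_nonneg (by simpa using hmem)
            (fun _ _ _ => zero_le_one)
  rw [fracMetricDim]
  refine le_csInf hne_set ?_
  rintro w ⟨f, hf, rfl⟩
  have hloc : ∀ u : α, fracLoc H ≤ ∑ v, f (u, v) := by
    intro u
    exact csInf_le hbdd ⟨fun v => f (u, v), main f hf u, rfl⟩
  calc (Fintype.card α : ℝ) * fracLoc H = ∑ _u : α, fracLoc H := by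
        rw [Finset.sum_const, card_univ, nsmul_eq_mul]
    _ ≤ ∑ u : α, ∑ v, f (u, v) := Finset.sum_le_sum fun u _ => hloc u
    _ = ∑ p : α × β, f p := (Fintype.sum_prod_type f).symm
end

section
/- Let G be a connected graph and H a graph. Then dim_f(G[H]) ≥ m1(G)·l_f(H) + (m2(G)/2)·dim_f(K2[H]) + (m3(G)/2)·dim_f(K2[H̄]), where H̄ is the complement of H. -/
open Finset

variable {α β V : Type*}

namespace Stmt15Aux

open SimpleGraph

variable {α β : Type*}

lemma exists_adj {α : Type*} [Fintype α] (G : SimpleGraph α) (hG : G.Connected)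
    (hca : 2 ≤ Fintype.card α) (u : α) : ∃ w, G.Adj u w := by
  obtain ⟨w, hw⟩ := Fintype.exists_ne_of_one_lt_card (by omega) u
  obtain ⟨p⟩ := hG.preconnected u w
  cases p with
  | nil => exact absurd rfl hw
  | cons h q => exact ⟨_, h⟩

open scoped Classical in
noncomputable def dd (H : SimpleGraph β) (v w : β) : ℕ∞ :=
  if v = w then 0 else if H.Adj v w then 1 else 2

lemma walk_proj {G : SimpleGraph α} {H : SimpleGraph β} {x y : α × β}
    (p : (G.lexProd H).Walk x y) : G.edist x.1 y.1 ≤ p.length := by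
  induction p with
  | nil => simp [SimpleGraph.edist_self]
  | @cons a c b h q ih =>
    have h1 : G.edist a.1 c.1 ≤ 1 := by
      rcases h with h | ⟨h, -⟩
      · exact le_of_eq (SimpleGraph.edist_eq_one_iff_adj.mpr h)
      · rw [h]; simp [SimpleGraph.edist_self]
    calc G.edist a.1 b.1 ≤ G.edist a.1 c.1 + G.edist c.1 b.1 := SimpleGraph.edist_triangle
      _ ≤ 1 + q.length := add_le_add h1 ih
      _ = ((q.length + 1 : ℕ) : ℕ∞) := by push_cast; ring
      _ = _ := by rw [SimpleGraph.Walk.length_cons]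

def lexHom (G : SimpleGraph α) (H : SimpleGraph β) (v : β) : G →g G.lexProd H where
  toFun u := (u, v)
  map_rel' h := Or.inl h

open scoped Classical in
lemma lex_edist {G : SimpleGraph α} {H : SimpleGraph β} [Fintype α]
    (hG : G.Connected) (hca : 2 ≤ Fintype.card α) (u1 u2 : α) (v1 v2 : β) :
    (G.lexProd H).edist (u1, v1) (u2, v2) =
      if u1 = u2 then dd H v1 v2 else G.edist u1 u2 := by
  classical
  by_cases h : u1 = u2
  · subst h
    rw [if_pos rfl]
    unfold dd
    by_cases hv : v1 = v2
    · subst hv; simp [SimpleGraph.edist_self]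
    · rw [if_neg hv]
      by_cases ha : H.Adj v1 v2
      · rw [if_pos ha]
        exact SimpleGraph.edist_eq_one_iff_adj.mpr (Or.inr ⟨rfl, ha⟩)
      · rw [if_neg ha]
        have hnadj : ¬ (G.lexProd H).Adj (u1, v1) (u1, v2) := by
          rintro (h' | ⟨-, h'⟩)
          · exact G.irrefl h'
          · exact ha h'
        have hne : ((u1, v1) : α × β) ≠ (u1, v2) := by
          simp [Prod.ext_iff, hv]
        have hge : 2 ≤ (G.lexProd H).edist (u1, v1) (u1, v2) := by
          have h0 : (G.lexProd H).edist (u1, v1) (u1, v2) ≠ 0 :=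
            fun hc => hne (SimpleGraph.edist_eq_zero_iff.mp hc)
          have h1 : (G.lexProd H).edist (u1, v1) (u1, v2) ≠ 1 :=
            fun hc => hnadj (SimpleGraph.edist_eq_one_iff_adj.mp hc)
          have : 1 < (G.lexProd H).edist (u1, v1) (u1, v2) :=
            lt_of_le_of_ne (Order.one_le_iff_pos.mpr (pos_iff_ne_zero.mpr h0)) (Ne.symm h1)
          exact Order.add_one_le_of_lt this
        have hle : (G.lexProd H).edist (u1, v1) (u1, v2) ≤ 2 := by
          obtain ⟨u', hu'⟩ := exists_adj G hG hca u1
          simpa using SimpleGraph.edist_le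
            (SimpleGraph.Walk.cons (show (G.lexProd H).Adj (u1, v1) (u', v1) from Or.inl hu')
              (SimpleGraph.Walk.cons (show (G.lexProd H).Adj (u', v1) (u1, v2) from Or.inl hu'.symm)
                SimpleGraph.Walk.nil))
        exact le_antisymm hle hge
  · rw [if_neg h]
    apply le_antisymm
    · obtain ⟨p, hp⟩ := hG.exists_walk_length_eq_edist u1 u2
      cases p with
      | nil => exact absurd rfl h
      | @cons _ x _ hadj q =>
        refine le_trans (SimpleGraph.edist_le
          (SimpleGraph.Walk.cons (show (G.lexProd H).Adj (u1, v1) (x, v2) from Or.inl hadj)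
            (q.map (lexHom G H v2)))) ?_
        rw [← hp]
        simp only [SimpleGraph.Walk.length_cons, SimpleGraph.Walk.length_map]
        exact Nat.cast_le.mpr (Nat.add_le_add_right (SimpleGraph.Walk.length_map _ q).le 1)
    · rw [SimpleGraph.edist_eq_sInf]
      apply le_sInf
      rintro b ⟨p, rfl⟩
      exact walk_proj p

end Stmt15Aux
namespace Stmt15Aux
open SimpleGraph

variable {α : Type*} {G : SimpleGraph α} {u1 u2 u w w' x : α}

lemma twins_symm (h : G.Twins u1 u2) : G.Twins u2 u1 :=
  ⟨h.1.symm, h.2.imp Eq.symm Eq.symm⟩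

lemma twins_adj_closed (h : G.Twins u1 u2) (hadj : G.Adj u1 u2) :
    insert u1 (G.neighborSet u1) = insert u2 (G.neighborSet u2) := by
  rcases h.2 with h2 | h2
  · exact h2
  · exfalso
    have h1 : u1 ∈ G.neighborSet u2 := hadj.symm
    rw [← h2] at h1
    exact G.irrefl h1

lemma twins_nonadj_open (h : G.Twins u1 u2) (hnadj : ¬G.Adj u1 u2) :
    G.neighborSet u1 = G.neighborSet u2 := by
  rcases h.2 with h2 | h2
  · exfalso
    have h1 : u1 ∈ insert u2 (G.neighborSet u2) := h2 ▸ Set.mem_insert _ _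
    rcases h1 with h1 | h1
    · exact h.1 h1
    · have h1' : G.Adj u2 u1 := h1
      exact hnadj h1'.symm
  · exact h2

lemma twins_adj_of_adj (h : G.Twins u1 u2) (hx : G.Adj u1 x) (hne : x ≠ u2) :
    G.Adj u2 x := by
  rcases h.2 with h2 | h2
  · have h1 : x ∈ insert u2 (G.neighborSet u2) := by
      rw [← h2]; exact Set.mem_insert_of_mem _ hx
    rcases h1 with h1 | h1
    · exact absurd h1 hne
    · exact h1
  · have h1 : x ∈ G.neighborSet u2 := h2 ▸ hx
    exact h1

lemma twin_edist_le (hG : G.Connected) (h : G.Twins u1 u2) (hw : w ≠ u1) :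
    G.edist u2 w ≤ G.edist u1 w := by
  obtain ⟨p, hp⟩ := hG.exists_walk_length_eq_edist u1 w
  cases p with
  | nil => exact absurd rfl hw
  | @cons _ x _ hadj q =>
    by_cases hx : x = u2
    · calc G.edist u2 w ≤ q.length := by rw [← hx]; exact SimpleGraph.edist_le q
        _ ≤ ((q.length + 1 : ℕ) : ℕ∞) := by exact_mod_cast Nat.le_succ _
        _ = G.edist u1 w := by rw [← hp]; simp
    · have hadj2 : G.Adj u2 x := twins_adj_of_adj h hadj hx
      calc G.edist u2 w ≤ (SimpleGraph.Walk.cons hadj2 q).length :=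
            SimpleGraph.edist_le _
        _ = G.edist u1 w := by rw [← hp]; simp

lemma twin_edist (hG : G.Connected) (h : G.Twins u1 u2) (hw1 : w ≠ u1) (hw2 : w ≠ u2) :
    G.edist u1 w = G.edist u2 w :=
  le_antisymm (twin_edist_le hG (twins_symm h) hw2) (twin_edist_le hG h hw1)

lemma twins_nonadj_edist_two [Fintype α] (hG : G.Connected) (hca : 2 ≤ Fintype.card α)
    (h : G.Twins u1 u2) (hnadj : ¬G.Adj u1 u2) : G.edist u1 u2 = 2 := by
  have ho := twins_nonadj_open h hnadj
  apply le_antisymm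
  · obtain ⟨x, hx⟩ := exists_adj G hG hca u1
    have hx2 : G.Adj u2 x := by
      have : x ∈ G.neighborSet u2 := ho ▸ hx
      exact this
    simpa using SimpleGraph.edist_le
      (SimpleGraph.Walk.cons hx (SimpleGraph.Walk.cons hx2.symm SimpleGraph.Walk.nil))
  · have h0 : G.edist u1 u2 ≠ 0 := fun hc => h.1 (SimpleGraph.edist_eq_zero_iff.mp hc)
    have h1 : G.edist u1 u2 ≠ 1 := fun hc => hnadj (SimpleGraph.edist_eq_one_iff_adj.mp hc)
    have : 1 < G.edist u1 u2 :=
      lt_of_le_of_ne (Order.one_le_iff_pos.mpr (pos_iff_ne_zero.mpr h0)) (Ne.symm h1)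
    exact Order.add_one_le_of_lt this

lemma r2_trans (h : G.Twins u w ∧ G.Adj u w) (h' : G.Twins u w' ∧ G.Adj u w')
    (hne : w ≠ w') : G.Twins w w' ∧ G.Adj w w' := by
  have c1 := twins_adj_closed h.1 h.2
  have c2 := twins_adj_closed h'.1 h'.2
  refine ⟨⟨hne, Or.inl (c1.symm.trans c2)⟩, ?_⟩
  have hw' : w' ∈ insert w (G.neighborSet w) := by
    rw [← c1]; exact Set.mem_insert_of_mem _ h'.2
  rcases hw' with h1 | h1
  · exact absurd h1.symm hne
  · exact h1

lemma r3_trans (h : G.Twins u w ∧ ¬G.Adj u w) (h' : G.Twins u w' ∧ ¬G.Adj u w')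
    (hne : w ≠ w') : G.Twins w w' ∧ ¬G.Adj w w' := by
  have o1 := twins_nonadj_open h.1 h.2
  have o2 := twins_nonadj_open h'.1 h'.2
  refine ⟨⟨hne, Or.inr (o1.symm.trans o2)⟩, ?_⟩
  intro hadj
  have : w ∈ G.neighborSet w' := hadj.symm
  rw [← o2] at this
  exact h.2 this

lemma not_type23 (h2 : G.Twins u w ∧ G.Adj u w) (h3 : G.Twins u w' ∧ ¬G.Adj u w') :
    False := by
  have c := twins_adj_closed h2.1 h2.2
  have o := twins_nonadj_open h3.1 h3.2
  have hww' : G.Adj w' w := by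
    have : w ∈ G.neighborSet w' := by rw [← o]; exact h2.2
    exact this
  have : w' ∈ insert u (G.neighborSet u) := by
    rw [c]; exact Set.mem_insert_of_mem _ hww'.symm
  rcases this with h1 | h1
  · exact h3.1.1 h1.symm
  · exact h3.2 h1

end Stmt15Aux
namespace Stmt15Aux

lemma clique_sum {γ : Type*} [DecidableEq γ] (C : Finset γ) (S : γ → ℝ) (D : ℝ)
    (h2 : 2 ≤ C.card)
    (hD : ∀ u ∈ C, ∀ w ∈ C, u ≠ w → D ≤ S u + S w) :
    (C.card : ℝ) / 2 * D ≤ ∑ u ∈ C, S u := by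
  set k := C.card with hk
  set T := ∑ u ∈ C, S u with hT
  have key : (k : ℝ) * (k - 1) * D ≤ 2 * (k - 1) * T := by
    have lhs : ∑ u ∈ C, ∑ w ∈ C.erase u, D ≤ ∑ u ∈ C, ∑ w ∈ C.erase u, (S u + S w) := by
      apply Finset.sum_le_sum
      intro u hu
      apply Finset.sum_le_sum
      intro w hw
      exact hD u hu w (Finset.mem_of_mem_erase hw) (Finset.ne_of_mem_erase hw).symm
    have e1 : ∑ u ∈ C, ∑ w ∈ C.erase u, D = (k : ℝ) * ((k : ℝ) - 1) * D := by
      rw [Finset.sum_congr rfl (fun u hu => by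
        rw [Finset.sum_const, Finset.card_erase_of_mem hu, nsmul_eq_mul])]
      rw [Finset.sum_const, nsmul_eq_mul]
      have : ((C.card - 1 : ℕ) : ℝ) = (k : ℝ) - 1 := by
        have : 1 ≤ C.card := by omega
        push_cast [Nat.cast_sub this]
        ring
      rw [this]; ring
    have e2 : ∑ u ∈ C, ∑ w ∈ C.erase u, (S u + S w) = 2 * ((k : ℝ) - 1) * T := by
      have : ∀ u ∈ C, ∑ w ∈ C.erase u, (S u + S w)
          = ((k : ℝ) - 1) * S u + (T - S u) := by
        intro u hu
        rw [Finset.sum_add_distrib, Finset.sum_const, Finset.card_erase_of_mem hu,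
          nsmul_eq_mul, Finset.sum_erase_eq_sub hu]
        have : ((C.card - 1 : ℕ) : ℝ) = (k : ℝ) - 1 := by
          have : 1 ≤ C.card := by omega
          push_cast [Nat.cast_sub this]
          ring
        rw [this]
      rw [Finset.sum_congr rfl this, Finset.sum_add_distrib, Finset.sum_sub_distrib,
        ← Finset.mul_sum, Finset.sum_const, nsmul_eq_mul]
      ring
    calc (k : ℝ) * ((k:ℝ) - 1) * D = ∑ u ∈ C, ∑ w ∈ C.erase u, D := e1.symm
      _ ≤ _ := lhs
      _ = 2 * ((k:ℝ) - 1) * T := e2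
  have hk1 : (1 : ℝ) ≤ (k : ℝ) - 1 := by
    have : (2 : ℝ) ≤ (k : ℝ) := by exact_mod_cast h2
    linarith
  nlinarith [key, hk1]

lemma grouped_sum {γ : Type*} [DecidableEq γ] (S : γ → ℝ) (D : ℝ)
    (r : γ → γ → Prop)
    (hsymm : ∀ u w, r u w → r w u)
    (htrans : ∀ u w w', r u w → r u w' → w ≠ w' → r w w') :
    ∀ T : Finset γ, (∀ u ∈ T, ∃ w ∈ T, r u w ∧ w ≠ u) →
      (∀ u w, r u w → D ≤ S u + S w) →
      (T.card : ℝ) / 2 * D ≤ ∑ u ∈ T, S u := by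
  classical
  intro T
  induction T using Finset.strongInduction with
  | _ T ih =>
    intro hex hD
    rcases Finset.eq_empty_or_nonempty T with rfl | ⟨u, hu⟩
    · simp
    · set C := T.filter (fun w => w = u ∨ r u w) with hC
      have hCsub : C ⊆ T := Finset.filter_subset _ _
      have huC : u ∈ C := by simp [hC, hu]
      obtain ⟨w0, hw0T, hw0r, hw0ne⟩ := hex u hu
      have hw0C : w0 ∈ C := by simp [hC, hw0T, hw0r]
      have hC2 : 2 ≤ C.card := by
        have : ({u, w0} : Finset γ) ⊆ C := by
          intro z hz
          simp only [Finset.mem_insert, Finset.mem_singleton] at hz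
          rcases hz with rfl | rfl
          · exact huC
          · exact hw0C
        calc 2 = ({u, w0} : Finset γ).card := by
              rw [Finset.card_insert_of_notMem (by simpa using hw0ne.symm),
                Finset.card_singleton]
          _ ≤ C.card := Finset.card_le_card this
      -- C is an r-clique
      have hclique : ∀ a ∈ C, ∀ b ∈ C, a ≠ b → r a b := by
        intro a ha b hb hab
        simp only [hC, Finset.mem_filter] at ha hb
        rcases ha.2 with rfl | ha2
        · rcases hb.2 with rfl | hb2
          · exact absurd rfl hab
          · exact hb2
        · rcases hb.2 with rfl | hb2
          · exact hsymm _ _ ha2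
          · exact htrans u a b ha2 hb2 hab
      have hCsum : (C.card : ℝ) / 2 * D ≤ ∑ x ∈ C, S x :=
        clique_sum C S D hC2 (fun a ha b hb hab => hD a b (hclique a ha b hb hab))
      -- rest
      have hrest : ((T \ C).card : ℝ) / 2 * D ≤ ∑ x ∈ T \ C, S x := by
        apply ih (T \ C)
        · exact Finset.sdiff_ssubset hCsub ⟨u, huC⟩
        · intro a ha
          rw [Finset.mem_sdiff] at ha
          obtain ⟨b, hbT, hbr, hbne⟩ := hex a ha.1
          refine ⟨b, Finset.mem_sdiff.mpr ⟨hbT, ?_⟩, hbr, hbne⟩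
          intro hbC
          apply ha.2
          simp only [hC, Finset.mem_filter] at hbC ⊢
          refine ⟨ha.1, ?_⟩
          rcases hbC.2 with rfl | hbu
          · exact Or.inr (hsymm _ _ hbr)
          · by_cases hau : a = u
            · exact Or.inl hau
            · exact Or.inr (htrans b u a (hsymm _ _ hbu) (hsymm _ _ hbr)
                (fun h => hau h.symm))
        · exact hD
      have hsplit : ∑ x ∈ T, S x = ∑ x ∈ C, S x + ∑ x ∈ T \ C, S x := by
        rw [← Finset.sum_union (Finset.disjoint_sdiff)]
        congr 1
        rw [Finset.union_sdiff_of_subset hCsub]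
      have hcard : T.card = C.card + (T \ C).card := by
        have := Finset.card_le_card hCsub
        rw [Finset.card_sdiff_of_subset hCsub]
        omega
      rw [hsplit, hcard]
      push_cast
      linarith

end Stmt15Aux
namespace Stmt15Aux
open SimpleGraph

variable {α β : Type*} [Fintype α] [Fintype β] [DecidableEq β]
  {G : SimpleGraph α} {H : SimpleGraph β} [DecidableRel H.Adj]

lemma dd_ne_iff {v1 v2 : β} (hv : v1 ≠ v2) (y : β) :
    dd H v1 y ≠ dd H v2 y ↔ y ∈ locatingFinset H v1 v2 := by
  classical
  unfold dd locatingFinset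
  by_cases h1 : v1 = y <;> by_cases h2 : v2 = y <;>
    by_cases a1 : H.Adj v1 y <;> by_cases a2 : H.Adj v2 y <;>
      simp_all [Finset.mem_union, Finset.mem_symmDiff, hv, Ne.symm hv] <;>
        exact ⟨fun h => h1 h.symm, fun h => h2 h.symm⟩

lemma ddc_ne_iff {v1 v2 : β} (hv : v1 ≠ v2) (w : β) :
    dd Hᶜ v1 w ≠ dd Hᶜ v2 w ↔ dd H v1 w ≠ dd H v2 w := by
  classical
  unfold dd
  by_cases h1 : v1 = w <;> by_cases h2 : v2 = w <;>
    by_cases a1 : H.Adj v1 w <;> by_cases a2 : H.Adj v2 w <;>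
      simp_all [SimpleGraph.compl_adj, hv] <;> decide

lemma ddc_ne_one_iff (v1 w : β) : dd Hᶜ v1 w ≠ 1 ↔ dd H v1 w ≠ 2 := by
  classical
  unfold dd
  by_cases h1 : v1 = w <;> by_cases a1 : H.Adj v1 w <;>
    simp_all [SimpleGraph.compl_adj] <;> decide

lemma col_locating (hG : G.Connected) (hca : 2 ≤ Fintype.card α)
    (g : α × β → ℝ) (hres : IsResolvingFn (G.lexProd H) g) (u : α) :
    IsLocatingFn H (fun v => g (u, v)) := by
  classical
  refine ⟨fun v => hres.1 (u, v), ?_⟩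
  intro v1 v2 hv
  have h1 := hres.2 (u, v1) (u, v2) (by simp [Prod.ext_iff, hv])
  refine le_trans h1 ?_
  have hsub : resolvingFinset (G.lexProd H) (u, v1) (u, v2)
      ⊆ (locatingFinset H v1 v2).image (fun v => (u, v)) := by
    rintro ⟨w, y⟩ hz
    simp only [resolvingFinset, Finset.mem_filter, Finset.mem_univ, true_and] at hz
    rw [lex_edist hG hca, lex_edist hG hca] at hz
    by_cases hw : u = w
    · subst hw
      rw [if_pos rfl, if_pos rfl] at hz
      rw [Finset.mem_image]
      exact ⟨y, (dd_ne_iff hv y).mp hz, rfl⟩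
    · rw [if_neg hw, if_neg hw] at hz
      exact absurd rfl hz
  calc ∑ z ∈ resolvingFinset (G.lexProd H) (u, v1) (u, v2), g z
      ≤ ∑ z ∈ (locatingFinset H v1 v2).image (fun v => (u, v)), g z :=
        Finset.sum_le_sum_of_subset_of_nonneg hsub (fun z _ _ => (hres.1 z).1)
    _ = ∑ v ∈ locatingFinset H v1 v2, g (u, v) := by
        rw [Finset.sum_image]
        intro a _ b _ hab
        exact (Prod.ext_iff.mp hab).2

lemma pair_resolving (hG : G.Connected) (hca : 2 ≤ Fintype.card α)
    {u1 u2 : α} (hne : u1 ≠ u2)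
    (htw : ∀ w', w' ≠ u1 → w' ≠ u2 → G.edist u1 w' = G.edist u2 w')
    (K : SimpleGraph β)
    (hiff : ∀ v1 v2 w : β, v1 ≠ v2 → (dd K v1 w ≠ dd K v2 w ↔ dd H v1 w ≠ dd H v2 w))
    (hcross : ∀ v1 w : β, dd K v1 w ≠ 1 ↔ dd H v1 w ≠ G.edist u1 u2)
    (g : α × β → ℝ) (hres : IsResolvingFn (G.lexProd H) g) :
    IsResolvingFn ((⊤ : SimpleGraph (Fin 2)).lexProd K)
      (fun p => g ((if p.1 = 0 then u1 else u2), p.2)) := by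
  classical
  set e : Fin 2 → α := fun i => if i = 0 then u1 else u2 with he
  have e0 : e 0 = u1 := by simp [he]
  have e1 : e 1 = u2 := by simp [he]
  have fin2cases : ∀ a b c : Fin 2, a ≠ b → ¬(a = c) → b = c := by decide
  have f2 : ∀ l : Fin 2, l = 0 ∨ l = 1 := by decide
  have einj : Function.Injective e := by
    intro a b hab
    rcases f2 a with rfl | rfl <;> rcases f2 b with rfl | rfl
    · rfl
    · rw [e0, e1] at hab; exact absurd hab hne
    · rw [e1, e0] at hab; exact absurd hab.symm hne
    · rfl
  have hK2conn : (⊤ : SimpleGraph (Fin 2)).Connected := SimpleGraph.connected_top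
  have hK2card : 2 ≤ Fintype.card (Fin 2) := by simp
  have eK2 : ∀ (i l : Fin 2) (v w : β),
      ((⊤ : SimpleGraph (Fin 2)).lexProd K).edist (i, v) (l, w)
        = if i = l then dd K v w else 1 := by
    intro i l v w
    rw [lex_edist hK2conn hK2card]
    by_cases h : i = l
    · simp [h]
    · simp [h, SimpleGraph.edist_top_of_ne h]
  have eGH : ∀ (a b : α) (v w : β), (G.lexProd H).edist (a, v) (b, w)
      = if a = b then dd H v w else G.edist a b := fun a b v w => lex_edist hG hca a b v w
  have eee : ∀ i j : Fin 2, i ≠ j → G.edist (e i) (e j) = G.edist u1 u2 := by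
    intro i j h
    rcases f2 i with rfl | rfl <;> rcases f2 j with rfl | rfl
    · exact absurd rfl h
    · rw [e0, e1]
    · rw [e1, e0]; exact SimpleGraph.edist_comm
    · exact absurd rfl h
  refine ⟨fun p => hres.1 _, ?_⟩
  rintro ⟨i, v1⟩ ⟨j, v2⟩ hxy
  have hEne : ((e i, v1) : α × β) ≠ (e j, v2) := by
    intro hc
    apply hxy
    rw [Prod.ext_iff] at hc ⊢
    exact ⟨einj hc.1, hc.2⟩
  have hmain := hres.2 (e i, v1) (e j, v2) hEne
  refine le_trans hmain ?_
  -- pointwise claim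
  have claim : ∀ (l : Fin 2) (w : β),
      ((G.lexProd H).edist (e i, v1) (e l, w) ≠ (G.lexProd H).edist (e j, v2) (e l, w)) ↔
      (((⊤ : SimpleGraph (Fin 2)).lexProd K).edist (i, v1) (l, w)
        ≠ ((⊤ : SimpleGraph (Fin 2)).lexProd K).edist (j, v2) (l, w)) := by
    intro l w
    rw [eGH, eGH, eK2, eK2]
    by_cases hij : i = j
    · subst hij
      have hv : v1 ≠ v2 := by
        intro hc; exact hxy (by rw [hc])
      by_cases hl : i = l
      · rw [if_pos (congrArg e hl), if_pos (congrArg e hl), if_pos hl, if_pos hl]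
        exact (hiff v1 v2 w hv).symm
      · rw [if_neg (fun hc => hl (einj hc)), if_neg (fun hc => hl (einj hc)),
          if_neg hl, if_neg hl]
        simp
    · by_cases hl : i = l
      · have hjl : j ≠ l := fun hc => hij (hl.trans hc.symm)
        rw [if_pos (congrArg e hl), if_neg (fun hc => hjl (einj hc)),
          if_pos hl, if_neg hjl, eee j l hjl]
        exact (hcross v1 w).symm
      · have hjl : j = l := fin2cases i j l hij hl
        rw [if_neg (fun hc => hl (einj hc)), if_pos (congrArg e hjl),
          if_neg hl, if_pos hjl, eee i l hl, ne_comm, Iff.comm, ne_comm]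
        exact hcross v2 w
  have claim2 : ∀ w' w, w' ≠ u1 → w' ≠ u2 →
      (G.lexProd H).edist (e i, v1) (w', w) = (G.lexProd H).edist (e j, v2) (w', w) := by
    intro w' w hw1 hw2
    have hei : ∀ l : Fin 2, e l ≠ w' := by
      intro l
      rcases f2 l with rfl | rfl
      · rw [e0]; exact Ne.symm hw1
      · rw [e1]; exact Ne.symm hw2
    have hval : ∀ l : Fin 2, G.edist (e l) w' = G.edist u1 w' := by
      intro l
      rcases f2 l with rfl | rfl
      · rw [e0]
      · rw [e1]; exact (htw w' hw1 hw2).symm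
    rw [eGH, eGH, if_neg (hei i), if_neg (hei j), hval i, hval j]
  have hsub : resolvingFinset (G.lexProd H) (e i, v1) (e j, v2) ⊆
      (resolvingFinset ((⊤ : SimpleGraph (Fin 2)).lexProd K) (i, v1) (j, v2)).image
        (fun p => (e p.1, p.2)) := by
    rintro ⟨w', w⟩ hz
    simp only [resolvingFinset, Finset.mem_filter, Finset.mem_univ, true_and] at hz
    have hw' : w' = u1 ∨ w' = u2 := by
      by_contra hc
      push_neg at hc
      exact hz (claim2 w' w hc.1 hc.2)
    have : ∃ l : Fin 2, e l = w' := by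
      rcases hw' with rfl | rfl
      · exact ⟨0, by simp [he]⟩
      · exact ⟨1, by simp [he]⟩
    obtain ⟨l, rfl⟩ := this
    rw [Finset.mem_image]
    refine ⟨(l, w), ?_, rfl⟩
    simp only [resolvingFinset, Finset.mem_filter, Finset.mem_univ, true_and]
    exact (claim l w).mp hz
  calc ∑ z ∈ resolvingFinset (G.lexProd H) (e i, v1) (e j, v2), g z
      ≤ ∑ z ∈ (resolvingFinset ((⊤ : SimpleGraph (Fin 2)).lexProd K) (i, v1) (j, v2)).image
          (fun p => (e p.1, p.2)), g z :=
        Finset.sum_le_sum_of_subset_of_nonneg hsub (fun z _ _ => (hres.1 z).1)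
    _ = _ :=
        Finset.sum_image (fun a _ b _ hab =>
          Prod.ext (einj (Prod.ext_iff.mp hab).1) (Prod.ext_iff.mp hab).2)

end Stmt15Aux
open Stmt15Aux

/-- For a connected graph `G` and a graph `H`,
`dim_f(G[H]) ≥ m₁(G)·l_f(H) + (m₂(G)/2)·dim_f(K₂[H]) + (m₃(G)/2)·dim_f(K₂[H̄])`. -/
theorem stmt_15 {α β : Type*} [Fintype α] [Fintype β] [DecidableEq β]
    (G : SimpleGraph α) (H : SimpleGraph β) [DecidableRel H.Adj]
    (hG : G.Connected) (hca : 2 ≤ Fintype.card α) (hcb : 2 ≤ Fintype.card β) :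
    (m1 G : ℝ) * fracLoc H +
        (m2 G : ℝ) / 2 * fracMetricDim ((⊤ : SimpleGraph (Fin 2)).lexProd H) +
        (m3 G : ℝ) / 2 * fracMetricDim ((⊤ : SimpleGraph (Fin 2)).lexProd Hᶜ) ≤
      fracMetricDim (G.lexProd H) := by
  classical
  -- the defining set is nonempty
  have hset_ne : {w | ∃ g, IsResolvingFn (G.lexProd H) g ∧ w = ∑ v, g v}.Nonempty := by
    refine ⟨∑ _v : α × β, (1 : ℝ), fun _ => 1, ⟨fun v => by norm_num, ?_⟩, rfl⟩
    intro x y hxy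
    have hx : x ∈ resolvingFinset (G.lexProd H) x y := by
      simp only [resolvingFinset, Finset.mem_filter, Finset.mem_univ, true_and]
      rw [SimpleGraph.edist_self]
      intro hc
      exact hxy (SimpleGraph.edist_eq_zero_iff.mp hc.symm).symm
    have hcard : 1 ≤ (resolvingFinset (G.lexProd H) x y).card :=
      Finset.card_pos.mpr ⟨x, hx⟩
    calc (1 : ℝ) ≤ ((resolvingFinset (G.lexProd H) x y).card : ℝ) := by exact_mod_cast hcard
      _ = ∑ _z ∈ resolvingFinset (G.lexProd H) x y, (1 : ℝ) := by
          rw [Finset.sum_const, nsmul_eq_mul, mul_one]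
  refine le_csInf hset_ne ?_
  rintro w ⟨g, hres, rfl⟩
  set S : α → ℝ := fun u => ∑ v, g (u, v) with hS
  -- bounds below for the three inf-sets
  have bddL : BddBelow {w | ∃ g', IsLocatingFn H g' ∧ w = ∑ v, g' v} := by
    refine ⟨0, ?_⟩
    rintro w ⟨g', hg', rfl⟩
    exact Finset.sum_nonneg fun v _ => (hg'.1 v).1
  have bdd2 : BddBelow {w | ∃ g', IsResolvingFn ((⊤ : SimpleGraph (Fin 2)).lexProd H) g'
      ∧ w = ∑ v, g' v} := by
    refine ⟨0, ?_⟩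
    rintro w ⟨g', hg', rfl⟩
    exact Finset.sum_nonneg fun v _ => (hg'.1 v).1
  have bdd3 : BddBelow {w | ∃ g', IsResolvingFn ((⊤ : SimpleGraph (Fin 2)).lexProd Hᶜ) g'
      ∧ w = ∑ v, g' v} := by
    refine ⟨0, ?_⟩
    rintro w ⟨g', hg', rfl⟩
    exact Finset.sum_nonneg fun v _ => (hg'.1 v).1
  -- bound A
  have boundA : ∀ u, fracLoc H ≤ S u := by
    intro u
    exact csInf_le bddL ⟨fun v => g (u, v), col_locating hG hca g hres u, rfl⟩
  -- bound B
  have boundB : ∀ u1 u2, G.Twins u1 u2 → G.Adj u1 u2 →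
      fracMetricDim ((⊤ : SimpleGraph (Fin 2)).lexProd H) ≤ S u1 + S u2 := by
    intro u1 u2 htw hadj
    have h1 : G.edist u1 u2 = 1 := SimpleGraph.edist_eq_one_iff_adj.mpr hadj
    have hres2 : IsResolvingFn ((⊤ : SimpleGraph (Fin 2)).lexProd H)
        (fun p => g ((if p.1 = 0 then u1 else u2), p.2)) :=
      pair_resolving hG hca htw.1 (fun w' hw1 hw2 => twin_edist hG htw hw1 hw2) H
        (fun _ _ _ _ => Iff.rfl) (fun v1 w => by rw [h1]) g hres
    have hmem := csInf_le bdd2 ⟨_, hres2, rfl⟩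
    refine le_trans hmem (le_of_eq ?_)
    rw [Fintype.sum_prod_type, Fin.sum_univ_two]
    norm_num
    rfl
  -- bound C
  have boundC : ∀ u1 u2, G.Twins u1 u2 → ¬G.Adj u1 u2 →
      fracMetricDim ((⊤ : SimpleGraph (Fin 2)).lexProd Hᶜ) ≤ S u1 + S u2 := by
    intro u1 u2 htw hnadj
    have h2 : G.edist u1 u2 = 2 := twins_nonadj_edist_two hG hca htw hnadj
    have hres2 : IsResolvingFn ((⊤ : SimpleGraph (Fin 2)).lexProd Hᶜ)
        (fun p => g ((if p.1 = 0 then u1 else u2), p.2)) :=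
      pair_resolving hG hca htw.1 (fun w' hw1 hw2 => twin_edist hG htw hw1 hw2) Hᶜ
        (fun v1 v2 w hv => ddc_ne_iff hv w) (fun v1 w => by rw [h2]; exact ddc_ne_one_iff v1 w)
        g hres
    have hmem := csInf_le bdd3 ⟨_, hres2, rfl⟩
    refine le_trans hmem (le_of_eq ?_)
    rw [Fintype.sum_prod_type, Fin.sum_univ_two]
    norm_num
    rfl
  -- the three predicates
  set P1 : α → Prop := fun u => ∀ w, ¬G.Twins u w with hP1
  set P2 : α → Prop := fun u => ∃ w, G.Twins u w ∧ G.Adj u w with hP2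
  set P3 : α → Prop := fun u => ∃ w, G.Twins u w ∧ ¬G.Adj u w with hP3
  have hP2nP1 : ∀ u, P2 u → ¬P1 u := by
    rintro u ⟨w, htw, -⟩ h1
    exact h1 w htw
  have hP3nP1 : ∀ u, P3 u → ¬P1 u := by
    rintro u ⟨w, htw, -⟩ h1
    exact h1 w htw
  have hP3nP2 : ∀ u, P3 u → ¬P2 u := by
    rintro u ⟨w', h3a, h3b⟩ ⟨w, h2a, h2b⟩
    exact not_type23 ⟨h2a, h2b⟩ ⟨h3a, h3b⟩
  have hNP1NP2 : ∀ u, ¬P1 u → ¬P2 u → P3 u := by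
    intro u h1 h2
    obtain ⟨w, htw⟩ := not_forall_not.mp h1
    by_cases hadj : G.Adj u w
    · exact absurd ⟨w, htw, hadj⟩ h2
    · exact ⟨w, htw, hadj⟩
  -- cardinalities
  have hm1 : m1 G = (Finset.univ.filter P1).card := by
    unfold m1; congr 1
  have hm2 : m2 G = (Finset.univ.filter P2).card := by
    unfold m2; congr 1
  have hm3 : m3 G = (Finset.univ.filter P3).card := by
    unfold m3; congr 1
  -- splitting the sum
  have hsplit : ∑ u, S u = ∑ u ∈ Finset.univ.filter P1, S u
      + ∑ u ∈ Finset.univ.filter P2, S u + ∑ u ∈ Finset.univ.filter P3, S u := by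
    rw [← Finset.sum_filter_add_sum_filter_not Finset.univ P1 S]
    have e23 : Finset.univ.filter (fun u => ¬P1 u)
        = Finset.univ.filter P2 ∪ Finset.univ.filter P3 := by
      ext u
      simp only [Finset.mem_filter, Finset.mem_univ, true_and, Finset.mem_union]
      constructor
      · intro h
        by_cases h2 : P2 u
        · exact Or.inl h2
        · exact Or.inr (hNP1NP2 u h h2)
      · rintro (h | h)
        · exact hP2nP1 u h
        · exact hP3nP1 u h
    have hdisj : Disjoint (Finset.univ.filter P2) (Finset.univ.filter P3) := by
      rw [Finset.disjoint_left]
      intro u hu2 hu3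
      simp only [Finset.mem_filter, Finset.mem_univ, true_and] at hu2 hu3
      exact hP3nP2 u hu3 hu2
    rw [e23, Finset.sum_union hdisj]
    ring
  -- bound on T1
  have bT1 : ((Finset.univ.filter P1).card : ℝ) * fracLoc H
      ≤ ∑ u ∈ Finset.univ.filter P1, S u := by
    have := Finset.card_nsmul_le_sum (Finset.univ.filter P1) S (fracLoc H)
      (fun u _ => boundA u)
    rwa [nsmul_eq_mul] at this
  -- bound on T2
  have bT2 : ((Finset.univ.filter P2).card : ℝ) / 2
        * fracMetricDim ((⊤ : SimpleGraph (Fin 2)).lexProd H)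
      ≤ ∑ u ∈ Finset.univ.filter P2, S u := by
    apply grouped_sum S _ (fun u w => G.Twins u w ∧ G.Adj u w)
      (fun u w h => ⟨twins_symm h.1, h.2.symm⟩)
      (fun u w w' h h' hne => r2_trans h h' hne)
    · intro u hu
      simp only [Finset.mem_filter, Finset.mem_univ, true_and] at hu
      obtain ⟨w, htw, hadj⟩ := hu
      refine ⟨w, ?_, ⟨htw, hadj⟩, htw.1.symm⟩
      simp only [Finset.mem_filter, Finset.mem_univ, true_and]
      exact ⟨u, twins_symm htw, hadj.symm⟩
    · intro u w h
      exact boundB u w h.1 h.2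
  -- bound on T3
  have bT3 : ((Finset.univ.filter P3).card : ℝ) / 2
        * fracMetricDim ((⊤ : SimpleGraph (Fin 2)).lexProd Hᶜ)
      ≤ ∑ u ∈ Finset.univ.filter P3, S u := by
    apply grouped_sum S _ (fun u w => G.Twins u w ∧ ¬G.Adj u w)
      (fun u w h => ⟨twins_symm h.1, fun hc => h.2 hc.symm⟩)
      (fun u w w' h h' hne => r3_trans h h' hne)
    · intro u hu
      simp only [Finset.mem_filter, Finset.mem_univ, true_and] at hu
      obtain ⟨w, htw, hadj⟩ := hu
      refine ⟨w, ?_, ⟨htw, hadj⟩, htw.1.symm⟩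
      simp only [Finset.mem_filter, Finset.mem_univ, true_and]
      exact ⟨u, twins_symm htw, fun hc => hadj hc.symm⟩
    · intro u w h
      exact boundC u w h.1 h.2
  have htot : ∑ v : α × β, g v = ∑ u, S u := by
    rw [Fintype.sum_prod_type]
  rw [htot, hsplit, hm1, hm2, hm3]
  push_cast
  linarith [bT1, bT2, bT3]
end
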